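/- arXiv:2303.12133 — 6 statements merged into one kernel-verified Lean document; each statement's English description precedes it below -/
import Mathlib

section
/- For a symmetric positive definite n×n real matrix X, the minimizer over positive definite matrices of the function X ↦ Tr[HX] + β⁻¹Tr[X log X − X], where H is a fixed symmetric matrix and β > 0, is X = exp(−βH), and the minimum value is −β⁻¹ Tr[exp(−βH)]. -/
open Matrix

/-- Matrix logarithm of a Hermitian matrix, via the continuous functional calculus
(junk value `0` on non-Hermitian matrices). -/
noncomputable def matLog {n : ℕ} (A : Matrix (Fin n) (Fin n) ℝ) : Matrix (Fin n) (Fin n) ℝ :=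
  if h : A.IsHermitian then h.cfc Real.log else 0

private lemma matLog_exp {n : ℕ} (M : Matrix (Fin n) (Fin n) ℝ) (hM : M.IsHermitian) :
    matLog (NormedSpace.exp M) = M := by
  have hG : (NormedSpace.exp M).IsHermitian := hM.exp
  rw [matLog, dif_pos hG, ← hG.cfc_eq]
  letI := Matrix.linftyOpNormedRing (α := ℝ) (n := Fin n)
  letI := Matrix.linftyOpNormedAlgebra (α := ℝ) (n := Fin n) (R := ℝ)
  exact @CFC.log_exp _ _ _ _ Matrix.IsHermitian.instContinuousFunctionalCalculus M hM

private lemma klein_pt {x g : ℝ} (hx : 0 < x) (hg : 0 < g) :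
    0 ≤ x * Real.log x - x * Real.log g - x + g := by
  have h := Real.add_one_le_exp (Real.log g - Real.log x)
  rw [Real.exp_sub, Real.exp_log hg, Real.exp_log hx] at h
  have h2 := mul_le_mul_of_nonneg_left h hx.le
  have h3 : x * (g / x) = g := by field_simp
  nlinarith

private lemma klein_pt_lt {x g : ℝ} (hx : 0 < x) (hg : 0 < g) (hne : x ≠ g) :
    0 < x * Real.log x - x * Real.log g - x + g := by
  have hlne : Real.log g - Real.log x ≠ 0 := by
    intro h
    apply hne
    have h4 : Real.log x = Real.log g := by linarith [sub_eq_zero.mp h]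
    rw [← Real.exp_log hx, ← Real.exp_log hg, h4]
  have h := Real.add_one_lt_exp hlne
  rw [Real.exp_sub, Real.exp_log hg, Real.exp_log hx] at h
  have h2 := mul_lt_mul_of_pos_left h hx
  have h3 : x * (g / x) = g := by field_simp
  nlinarith

private lemma trace_conj {n : ℕ} (V : Matrix (Fin n) (Fin n) ℝ) (d : Fin n → ℝ)
    (hV : star V * V = 1) :
    (V * diagonal d * star V).trace = ∑ i, d i := by
  rw [trace_mul_cycle, hV, Matrix.one_mul, trace_diagonal]

private lemma trace_conj_mul_conj {n : ℕ} (U V : Matrix (Fin n) (Fin n) ℝ) (a b : Fin n → ℝ) :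
    (V * diagonal a * star V * (U * diagonal b * star U)).trace
      = ∑ i, ∑ j, ((star V * U) j i)^2 * (a j * b i) := by
  set C := star V * U with hC
  have h1 : V * diagonal a * star V * (U * diagonal b * star U)
      = V * (diagonal a * C * diagonal b) * star U := by
    simp only [hC, Matrix.mul_assoc]
  have h2 : star U * V = star C := by rw [hC, Matrix.star_mul, star_star]
  have hmid : diagonal a * C * diagonal b = Matrix.of (fun k l => a k * C k l * b l) := by
    ext k l
    simp [Matrix.mul_diagonal, Matrix.diagonal_mul]
  rw [h1, trace_mul_cycle, h2, hmid]
  simp only [Matrix.trace, Matrix.diag_apply, Matrix.mul_apply, Matrix.star_apply, star_trivial,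
    Matrix.of_apply]
  refine Finset.sum_congr rfl fun i _ => Finset.sum_congr rfl fun j _ => by ring

private lemma klein_sum {n : ℕ} (x g : Fin n → ℝ) (hx : ∀ i, 0 < x i) (hg : ∀ j, 0 < g j)
    (C : Matrix (Fin n) (Fin n) ℝ)
    (hrow : ∀ j, ∑ i, (C j i)^2 = 1) (hcol : ∀ i, ∑ j, (C j i)^2 = 1) :
    0 ≤ (∑ i, x i * Real.log (x i)) - (∑ i, ∑ j, (C j i)^2 * (Real.log (g j) * x i))
        - (∑ i, x i) + (∑ j, g j) ∧
    ((∃ i j, C j i ≠ 0 ∧ x i ≠ g j) →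
      0 < (∑ i, x i * Real.log (x i)) - (∑ i, ∑ j, (C j i)^2 * (Real.log (g j) * x i))
        - (∑ i, x i) + (∑ j, g j)) := by
  have e1 : ∀ i, ∑ j, (C j i)^2 * (x i * Real.log (x i)) = x i * Real.log (x i) := fun i => by
    rw [← Finset.sum_mul, hcol i, one_mul]
  have e2 : ∀ i, ∑ j, (C j i)^2 * x i = x i := fun i => by
    rw [← Finset.sum_mul, hcol i, one_mul]
  have e3 : ∀ j, ∑ i, (C j i)^2 * g j = g j := fun j => by
    rw [← Finset.sum_mul, hrow j, one_mul]
  have key : (∑ i, x i * Real.log (x i)) - (∑ i, ∑ j, (C j i)^2 * (Real.log (g j) * x i))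
        - (∑ i, x i) + (∑ j, g j)
      = ∑ i, ∑ j, (C j i)^2 * (x i * Real.log (x i) - x i * Real.log (g j) - x i + g j) := by
    simp only [mul_sub, mul_add, Finset.sum_sub_distrib, Finset.sum_add_distrib]
    congr 1
    congr 1
    congr 1
    · exact Finset.sum_congr rfl fun i _ => (e1 i).symm
    · exact Finset.sum_congr rfl fun i _ => Finset.sum_congr rfl fun j _ => by ring
    · exact Finset.sum_congr rfl fun i _ => (e2 i).symm
    · rw [Finset.sum_comm]
      exact Finset.sum_congr rfl fun j _ => (e3 j).symm
  rw [key]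
  constructor
  · refine Finset.sum_nonneg fun i _ => Finset.sum_nonneg fun j _ =>
      mul_nonneg (sq_nonneg _) (klein_pt (hx i) (hg j))
  · rintro ⟨i, j, hCij, hne⟩
    refine Finset.sum_pos' (fun i _ => Finset.sum_nonneg fun j _ =>
      mul_nonneg (sq_nonneg _) (klein_pt (hx i) (hg j))) ⟨i, Finset.mem_univ i, ?_⟩
    refine Finset.sum_pos' (fun j _ => mul_nonneg (sq_nonneg _) (klein_pt (hx i) (hg j)))
      ⟨j, Finset.mem_univ j, ?_⟩
    exact mul_pos (by positivity) (klein_pt_lt (hx i) (hg j) hne)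

/-- The minimizer over symmetric positive definite matrices of
`X ↦ Tr[HX] + β⁻¹ Tr[X log X − X]` is `X = exp(−βH)`, with minimum value
`−β⁻¹ Tr[exp(−βH)]`. -/
theorem entropic_min {n : ℕ} (H : Matrix (Fin n) (Fin n) ℝ) (hH : H.IsHermitian)
    (β : ℝ) (hβ : 0 < β)
    (f : Matrix (Fin n) (Fin n) ℝ → ℝ)
    (hf : ∀ X, f X = (H * X).trace + β⁻¹ * (X * matLog X - X).trace) :
    f (NormedSpace.exp ((-β) • H)) = -β⁻¹ * (NormedSpace.exp ((-β) • H)).trace ∧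
    ∀ X : Matrix (Fin n) (Fin n) ℝ, X.PosDef →
      (-β⁻¹ * (NormedSpace.exp ((-β) • H)).trace ≤ f X ∧
        (X ≠ NormedSpace.exp ((-β) • H) →
          -β⁻¹ * (NormedSpace.exp ((-β) • H)).trace < f X)) := by
  have hβ' : β ≠ 0 := ne_of_gt hβ
  have hM : ((-β) • H).IsHermitian := by
    have : ((-β) • H)ᴴ = (-β) • Hᴴ := by
      rw [Matrix.conjTranspose_smul]
      norm_num
    rw [Matrix.IsHermitian, this, hH.eq]
  set G := NormedSpace.exp ((-β) • H) with hGdef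
  have hlog : matLog G = (-β) • H := matLog_exp _ hM
  have part1 : f G = -β⁻¹ * G.trace := by
    rw [hf, hlog, Matrix.trace_sub, Matrix.mul_smul, Matrix.trace_smul, smul_eq_mul,
      Matrix.trace_mul_comm G H]
    field_simp
    ring
  refine ⟨part1, fun X hX => ?_⟩
  have hXh : X.IsHermitian := hX.1
  set U : Matrix (Fin n) (Fin n) ℝ := (hXh.eigenvectorUnitary : Matrix (Fin n) (Fin n) ℝ)
    with hUdef
  set x := hXh.eigenvalues with hxdef
  set V : Matrix (Fin n) (Fin n) ℝ := (hM.eigenvectorUnitary : Matrix (Fin n) (Fin n) ℝ)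
    with hVdef
  set ν := hM.eigenvalues with hnudef
  set C := star V * U with hCdef
  set g : Fin n → ℝ := fun j => Real.exp (ν j) with hgdef
  have hU1 : star U * U = 1 := Matrix.mem_unitaryGroup_iff'.mp hXh.eigenvectorUnitary.2
  have hU2 : U * star U = 1 := Matrix.mem_unitaryGroup_iff.mp hXh.eigenvectorUnitary.2
  have hV1 : star V * V = 1 := Matrix.mem_unitaryGroup_iff'.mp hM.eigenvectorUnitary.2
  have hV2 : V * star V = 1 := Matrix.mem_unitaryGroup_iff.mp hM.eigenvectorUnitary.2
  have hofReal : ∀ (v : Fin n → ℝ), ((RCLike.ofReal : ℝ → ℝ) ∘ v) = v := fun v =>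
    funext fun i => by simp
  have hXdec : X = U * diagonal x * star U := by
    have h := hXh.spectral_theorem
    rwa [hofReal] at h
  have hMdec : (-β) • H = V * diagonal ν * star V := by
    have h := hM.spectral_theorem
    rwa [hofReal] at h
  have hGdec : G = V * diagonal g * star V := by
    have hVunit : IsUnit V := ⟨⟨V, star V, hV2, hV1⟩, rfl⟩
    have hVinv : V⁻¹ = star V := Matrix.inv_eq_right_inv hV2
    have hconj : NormedSpace.exp (V * diagonal ν * V⁻¹)
        = V * NormedSpace.exp (diagonal ν) * V⁻¹ := Matrix.exp_conj V _ hVunit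
    rw [hVinv] at hconj
    have hexpnu : NormedSpace.exp ν = g := by
      rw [Pi.exp_def]
      funext j
      rw [hgdef, ← Real.exp_eq_exp_ℝ]
    have hdiag : NormedSpace.exp (diagonal ν) = diagonal g := by
      rw [Matrix.exp_diagonal, hexpnu]
    rw [hGdef, hMdec, hconj, hdiag]
  have matLogX : matLog X = U * diagonal ((RCLike.ofReal : ℝ → ℝ) ∘ Real.log ∘ x) * star U := by
    rw [matLog, dif_pos hXh]
    rfl
  have matLogX' : matLog X = U * diagonal (fun i => Real.log (x i)) * star U := by
    rw [matLogX, hofReal]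
    rfl
  have tX : X.trace = ∑ i, x i := by rw [hXdec, trace_conj U x hU1]
  have tG : G.trace = ∑ j, g j := by rw [hGdec, trace_conj V g hV1]
  have tXlog : (X * matLog X).trace = ∑ i, x i * Real.log (x i) := by
    rw [matLogX', hXdec, trace_conj_mul_conj, hU1]
    refine Finset.sum_congr rfl fun i _ => ?_
    rw [Finset.sum_eq_single i]
    · rw [Matrix.one_apply_eq]; ring
    · intro j _ hji
      rw [Matrix.one_apply_ne hji]; ring
    · intro h; exact absurd (Finset.mem_univ i) h
  have tHX : (H * X).trace = (-β)⁻¹ * (∑ i, ∑ j, (C j i)^2 * (ν j * x i)) := by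
    have hH2 : H = (-β)⁻¹ • ((-β) • H) := by
      rw [smul_smul, inv_mul_cancel₀ (neg_ne_zero.mpr hβ'), one_smul]
    calc (H * X).trace = ((-β)⁻¹ • ((-β) • H) * X).trace := by rw [← hH2]
    _ = (-β)⁻¹ * (((-β) • H) * X).trace := by
        rw [Matrix.smul_mul, Matrix.trace_smul, smul_eq_mul]
    _ = (-β)⁻¹ * (∑ i, ∑ j, (C j i)^2 * (ν j * x i)) := by
        rw [hMdec, hXdec, trace_conj_mul_conj, hCdef]
  have hCC1 : C * star C = 1 := by
    rw [hCdef, Matrix.star_mul, star_star]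
    have h : star V * U * (star U * V) = star V * (U * star U * V) := by
      simp [Matrix.mul_assoc]
    rw [h, hU2, Matrix.one_mul, hV1]
  have hCC2 : star C * C = 1 := by
    rw [hCdef, Matrix.star_mul, star_star]
    have h : star U * V * (star V * U) = star U * (V * star V * U) := by
      simp [Matrix.mul_assoc]
    rw [h, hV2, Matrix.one_mul, hU1]
  have hrow : ∀ j, ∑ i, (C j i)^2 = 1 := by
    intro j
    calc ∑ i, (C j i)^2 = ∑ i, C j i * (star C) i j :=
          Finset.sum_congr rfl fun i _ => by rw [Matrix.star_apply, star_trivial, pow_two]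
    _ = (C * star C) j j := (Matrix.mul_apply).symm
    _ = 1 := by rw [hCC1, Matrix.one_apply_eq]
  have hcol : ∀ i, ∑ j, (C j i)^2 = 1 := by
    intro i
    calc ∑ j, (C j i)^2 = ∑ j, (star C) i j * C j i :=
          Finset.sum_congr rfl fun j _ => by rw [Matrix.star_apply, star_trivial, pow_two]
    _ = (star C * C) i i := (Matrix.mul_apply).symm
    _ = 1 := by rw [hCC2, Matrix.one_apply_eq]
  have hxpos : ∀ i, 0 < x i := fun i => hX.eigenvalues_pos i
  have hgpos : ∀ j, 0 < g j := fun j => Real.exp_pos _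
  obtain ⟨hK0, hKlt⟩ := klein_sum x g hxpos hgpos C hrow hcol
  have hlg : ∀ j, Real.log (g j) = ν j := fun j => by
    rw [hgdef]; exact Real.log_exp _
  simp only [hlg] at hK0 hKlt
  have hfX : f X = -β⁻¹ * (∑ i, ∑ j, (C j i)^2 * (ν j * x i))
      + β⁻¹ * ((∑ i, x i * Real.log (x i)) - ∑ i, x i) := by
    rw [hf, Matrix.trace_sub, tHX, tXlog, tX, inv_neg]
  constructor
  · rw [tG, hfX]
    have h := mul_nonneg (inv_nonneg.mpr hβ.le) hK0
    nlinarith [h]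
  · intro hne
    have hrec : (∀ i j, C j i ≠ 0 → x i = g j) → X = G := by
      intro hall
      have hBC : ∀ i j, (star U * V) i j = C j i := by
        intro i j
        have hs : star U * V = star C := by rw [hCdef, Matrix.star_mul, star_star]
        rw [hs, Matrix.star_apply, star_trivial]
      have hB : diagonal x * (star U * V) = (star U * V) * diagonal g := by
        ext i j
        rw [Matrix.diagonal_mul, Matrix.mul_diagonal, hBC i j]
        rcases eq_or_ne (C j i) 0 with h0 | h0
        · rw [h0, mul_zero, zero_mul]
        · rw [hall i j h0]; ring
      have hXV : X * V = V * diagonal g := by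
        rw [hXdec]
        calc U * diagonal x * star U * V = U * (diagonal x * (star U * V)) := by
              simp [Matrix.mul_assoc]
        _ = U * ((star U * V) * diagonal g) := by rw [hB]
        _ = (U * star U) * (V * diagonal g) := by simp [Matrix.mul_assoc]
        _ = V * diagonal g := by rw [hU2, Matrix.one_mul]
      calc X = X * (V * star V) := by rw [hV2, Matrix.mul_one]
      _ = (X * V) * star V := by rw [Matrix.mul_assoc]
      _ = V * diagonal g * star V := by rw [hXV]
      _ = G := hGdec.symm
    have hex : ∃ i j, C j i ≠ 0 ∧ x i ≠ g j := by
      by_contra hcon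
      push_neg at hcon
      exact hne (hrec fun i j h => hcon i j h)
    have hKpos := hKlt hex
    rw [tG, hfX]
    have h := mul_pos (inv_pos.mpr hβ) hKpos
    nlinarith [h]
end

section
/- For a symmetric matrix H and β > 0, the minimizer over symmetric matrices X with 0 ≺ X ≺ I of Tr[HX] + β⁻¹(Tr[X log X] + Tr[(I−X) log(I−X)]) is X = (I + exp(βH))⁻¹, and the minimum value is −β⁻¹ Tr[log(I + exp(−βH))]. -/
open Matrix

namespace BEM

noncomputable def yy (β h : ℝ) : ℝ := (1 + Real.exp (β * h))⁻¹

lemma one_add_exp_pos (t : ℝ) : 0 < 1 + Real.exp t := by positivity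

lemma yy_pos (β h : ℝ) : 0 < yy β h := by
  unfold yy; positivity

lemma yy_lt_one (β h : ℝ) : yy β h < 1 := by
  unfold yy
  rw [inv_lt_one_iff₀]
  right
  have := Real.exp_pos (β * h)
  linarith

lemma log_yy (β h : ℝ) : Real.log (yy β h) = -Real.log (1 + Real.exp (β * h)) := by
  unfold yy; rw [Real.log_inv]

lemma one_sub_yy (β h : ℝ) : 1 - yy β h = Real.exp (β * h) * yy β h := by
  unfold yy
  have h1 : (1 : ℝ) + Real.exp (β * h) ≠ 0 := (one_add_exp_pos _).ne'
  field_simp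
  ring

lemma log_one_sub_yy (β h : ℝ) :
    Real.log (1 - yy β h) = β * h - Real.log (1 + Real.exp (β * h)) := by
  rw [one_sub_yy, Real.log_mul (Real.exp_ne_zero _) (yy_pos β h).ne', Real.log_exp, log_yy]
  ring

lemma log_one_add_exp_neg (t : ℝ) :
    Real.log (1 + Real.exp (-t)) = Real.log (1 + Real.exp t) - t := by
  have h1 : (1 : ℝ) + Real.exp (-t) = (1 + Real.exp t) * Real.exp (-t) := by
    rw [Real.exp_neg]
    have := (Real.exp_pos t).ne'
    field_simp
    ring
  rw [h1, Real.log_mul (one_add_exp_pos t).ne' (Real.exp_ne_zero _), Real.log_exp]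
  ring

lemma scalar_value {β : ℝ} (hβ : 0 < β) (h : ℝ) :
    h * yy β h + β⁻¹ * (yy β h * Real.log (yy β h)
      + (1 - yy β h) * Real.log (1 - yy β h)) = -β⁻¹ * Real.log (1 + Real.exp (-(β * h))) := by
  rw [log_yy, log_one_sub_yy, log_one_add_exp_neg, one_sub_yy]
  have hy : yy β h = (1 + Real.exp (β * h))⁻¹ := rfl
  have h1 : (1 : ℝ) + Real.exp (β * h) ≠ 0 := (one_add_exp_pos _).ne'
  rw [hy]
  field_simp
  ring

lemma kl_pos {x y : ℝ} (hx0 : 0 < x) (hx1 : x < 1) (hy0 : 0 < y) (hy1 : y < 1)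
    (hxy : x ≠ y) :
    0 < x * (Real.log x - Real.log y) + (1 - x) * (Real.log (1 - x) - Real.log (1 - y)) := by
  have h1x : (0:ℝ) < 1 - x := by linarith
  have h1y : (0:ℝ) < 1 - y := by linarith
  have hp : y / x ∈ Set.Ioi (0:ℝ) := Set.mem_Ioi.mpr (div_pos hy0 hx0)
  have hq : (1 - y) / (1 - x) ∈ Set.Ioi (0:ℝ) := Set.mem_Ioi.mpr (div_pos h1y h1x)
  have hne : y / x ≠ (1 - y) / (1 - x) := by
    intro hEq
    apply hxy
    field_simp at hEq
    nlinarith [hEq]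
  have H := strictConcaveOn_log_Ioi.2 hp hq hne hx0 h1x (by ring)
  have e1 : x • (y / x) + (1 - x) • ((1 - y) / (1 - x)) = 1 := by
    rw [smul_eq_mul, smul_eq_mul, mul_div_cancel₀ _ hx0.ne', mul_div_cancel₀ _ h1x.ne']
    ring
  rw [e1, Real.log_one, smul_eq_mul, smul_eq_mul,
    Real.log_div hy0.ne' hx0.ne', Real.log_div h1y.ne' h1x.ne'] at H
  nlinarith [H]

lemma scalar_diff {β : ℝ} (hβ : 0 < β) (h x : ℝ) :
    h * x + β⁻¹ * (x * Real.log x + (1 - x) * Real.log (1 - x))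
      - (-β⁻¹ * Real.log (1 + Real.exp (-(β * h))))
    = β⁻¹ * (x * (Real.log x - Real.log (yy β h))
        + (1 - x) * (Real.log (1 - x) - Real.log (1 - yy β h))) := by
  rw [log_yy, log_one_sub_yy, log_one_add_exp_neg]
  field_simp
  ring

lemma scalar_le {β : ℝ} (hβ : 0 < β) (h : ℝ) {x : ℝ} (hx0 : 0 < x) (hx1 : x < 1) :
    -β⁻¹ * Real.log (1 + Real.exp (-(β * h)))
      ≤ h * x + β⁻¹ * (x * Real.log x + (1 - x) * Real.log (1 - x)) := by
  rcases eq_or_ne x (yy β h) with rfl | hne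
  · exact le_of_eq (scalar_value hβ h).symm
  · have hd := scalar_diff hβ h x
    have hk := kl_pos hx0 hx1 (yy_pos β h) (yy_lt_one β h) hne
    nlinarith [mul_pos (inv_pos.mpr hβ) hk]

lemma scalar_lt {β : ℝ} (hβ : 0 < β) (h : ℝ) {x : ℝ} (hx0 : 0 < x) (hx1 : x < 1)
    (hne : x ≠ yy β h) :
    -β⁻¹ * Real.log (1 + Real.exp (-(β * h)))
      < h * x + β⁻¹ * (x * Real.log x + (1 - x) * Real.log (1 - x)) := by
  have hd := scalar_diff hβ h x
  have hk := kl_pos hx0 hx1 (yy_pos β h) (yy_lt_one β h) hne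
  nlinarith [mul_pos (inv_pos.mpr hβ) hk]


variable {n : ℕ}

section Conj

variable {V : Matrix (Fin n) (Fin n) ℝ}

lemma conj_mul_conj (hV1 : star V * V = 1) (a b : Fin n → ℝ) :
    (V * diagonal a * star V) * (V * diagonal b * star V)
      = V * diagonal (fun i => a i * b i) * star V := by
  rw [← diagonal_mul_diagonal]
  calc (V * diagonal a * star V) * (V * diagonal b * star V)
      = V * (diagonal a * ((star V * V) * (diagonal b * star V))) := by
        simp only [mul_assoc]
    _ = V * (diagonal a * diagonal b) * star V := by
        rw [hV1, one_mul]; simp only [mul_assoc]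

lemma conj_add (a b : Fin n → ℝ) :
    (V * diagonal a * star V) + (V * diagonal b * star V)
      = V * diagonal (fun i => a i + b i) * star V := by
  rw [show (diagonal (fun i => a i + b i) : Matrix (Fin n) (Fin n) ℝ)
      = diagonal a + diagonal b from (diagonal_add a b).symm]
  rw [mul_add, add_mul]

lemma conj_sub (a b : Fin n → ℝ) :
    (V * diagonal a * star V) - (V * diagonal b * star V)
      = V * diagonal (fun i => a i - b i) * star V := by
  rw [show (diagonal (fun i => a i - b i) : Matrix (Fin n) (Fin n) ℝ)
      = diagonal a - diagonal b from (diagonal_sub a b).symm]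
  rw [mul_sub, sub_mul]

lemma conj_one (hV2 : V * star V = 1) :
    V * diagonal (fun _ => (1:ℝ)) * star V = 1 := by
  rw [diagonal_one, mul_one, hV2]

lemma conj_smul (c : ℝ) (a : Fin n → ℝ) :
    c • (V * diagonal a * star V) = V * diagonal (fun i => c * a i) * star V := by
  rw [show (fun i => c * a i) = c • a from rfl, diagonal_smul]
  rw [mul_smul_comm, smul_mul_assoc]

lemma conj_trace (hV1 : star V * V = 1) (a : Fin n → ℝ) :
    (V * diagonal a * star V).trace = ∑ i, a i := by
  rw [trace_mul_cycle, hV1, one_mul, trace_diagonal]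

lemma conj_herm (a : Fin n → ℝ) : (V * diagonal a * star V).IsHermitian := by
  have hd : (diagonal a).IsHermitian := isHermitian_diagonal_iff.mpr fun i => rfl
  have h := isHermitian_mul_mul_conjTranspose V hd
  simpa [star_eq_conjTranspose] using h

lemma conj_inv (hV1 : star V * V = 1) (hV2 : V * star V = 1) {a : Fin n → ℝ}
    (ha : ∀ i, a i ≠ 0) :
    (V * diagonal a * star V)⁻¹ = V * diagonal (fun i => (a i)⁻¹) * star V := by
  apply inv_eq_right_inv
  rw [conj_mul_conj hV1]
  rw [show (fun i => a i * (a i)⁻¹) = fun _ => (1:ℝ) from funext fun i => mul_inv_cancel₀ (ha i)]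
  exact conj_one hV2

lemma conj_exp (hV1 : star V * V = 1) (hV2 : V * star V = 1) (a : Fin n → ℝ) :
    NormedSpace.exp (V * diagonal a * star V)
      = V * diagonal (fun i => Real.exp (a i)) * star V := by
  let u : (Matrix (Fin n) (Fin n) ℝ)ˣ := ⟨V, star V, hV2, hV1⟩
  have h1 : V * diagonal a * star V
      = (u : Matrix (Fin n) (Fin n) ℝ) * diagonal a
        * ((u⁻¹ : (Matrix (Fin n) (Fin n) ℝ)ˣ) : Matrix (Fin n) (Fin n) ℝ) := rfl
  rw [h1, Matrix.exp_units_conj, Matrix.exp_diagonal, Pi.exp_def]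
  simp only [← Real.exp_eq_exp_ℝ]
  rfl

lemma conj_cancel (hV1 : star V * V = 1) (a : Fin n → ℝ) :
    star V * (V * diagonal a * star V) * V = diagonal a := by
  calc star V * (V * diagonal a * star V) * V
      = (star V * V) * diagonal a * (star V * V) := by simp only [mul_assoc]
    _ = diagonal a := by rw [hV1, one_mul, mul_one]

lemma cfc_conj (hV1 : star V * V = 1) (hV2 : V * star V = 1) (d : Fin n → ℝ)
    (hA : (V * diagonal d * star V).IsHermitian) (g : ℝ → ℝ) :
    hA.cfc g = V * diagonal (fun i => g (d i)) * star V := by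
  set W : Matrix (Fin n) (Fin n) ℝ := (Matrix.IsHermitian.eigenvectorUnitary hA :
    Matrix (Fin n) (Fin n) ℝ) with hW
  have hW1 : star W * W = 1 := by
    simpa [hW] using Unitary.star_mul_self_of_mem (SetLike.coe_mem
      (Matrix.IsHermitian.eigenvectorUnitary hA))
  have hW2 : W * star W = 1 := by
    simpa [hW] using Unitary.mul_star_self_of_mem (SetLike.coe_mem
      (Matrix.IsHermitian.eigenvectorUnitary hA))
  set ν : Fin n → ℝ := hA.eigenvalues with hν
  have hofR : (RCLike.ofReal ∘ ν : Fin n → ℝ) = ν := by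
    funext i; simp [RCLike.ofReal_real_eq_id]
  have hspec : V * diagonal d * star V = W * diagonal ν * star W := by
    conv_lhs => rw [hA.spectral_theorem, Unitary.conjStarAlgAut_apply]
    rw [hofR]
  set P : Matrix (Fin n) (Fin n) ℝ := star W * V with hP
  have hP1 : star P * P = 1 := by
    rw [hP, StarMul.star_mul, star_star]
    calc star V * W * (star W * V) = star V * (W * star W) * V := by simp only [mul_assoc]
      _ = 1 := by rw [hW2, mul_one, hV1]
  have hP2 : P * star P = 1 := by
    rw [hP, StarMul.star_mul, star_star]
    calc star W * V * (star V * W) = star W * (V * star V) * W := by simp only [mul_assoc]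
      _ = 1 := by rw [hV2, mul_one, hW1]
  have hcomm : diagonal ν * P = P * diagonal d := by
    have h1 : star W * (V * diagonal d * star V) * V = P * diagonal d := by
      calc star W * (V * diagonal d * star V) * V
          = (star W * V) * diagonal d * (star V * V) := by simp only [mul_assoc]
        _ = P * diagonal d := by rw [hV1, mul_one]
    have h2 : star W * (W * diagonal ν * star W) * V = diagonal ν * P := by
      calc star W * (W * diagonal ν * star W) * V
          = (star W * W) * diagonal ν * (star W * V) := by simp only [mul_assoc]
        _ = diagonal ν * P := by rw [hW1, one_mul]
    rw [← h2, ← h1, hspec]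
  have hg : diagonal (fun i => g (ν i)) * P = P * diagonal (fun i => g (d i)) := by
    ext i j
    rw [diagonal_mul, mul_diagonal]
    rcases eq_or_ne (P i j) 0 with h0 | h0
    · rw [h0, mul_zero, zero_mul]
    · have he : ν i * P i j = P i j * d j := by
        have := congrFun (congrFun hcomm i) j
        simpa [diagonal_mul, mul_diagonal] using this
      have hnd : ν i = d j := by
        rw [mul_comm (P i j) (d j)] at he
        exact mul_right_cancel₀ h0 he
      rw [hnd, mul_comm]
  have hVWP : V = W * P := by
    rw [hP, ← mul_assoc, hW2, one_mul]
  have hkey : P * diagonal (fun i => g (d i)) * star P = diagonal (fun i => g (ν i)) := by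
    rw [← hg, mul_assoc, hP2, mul_one]
  have hco : (RCLike.ofReal ∘ g ∘ ν : Fin n → ℝ) = fun i => g (ν i) := by
    funext i; simp [RCLike.ofReal_real_eq_id]
  have hcfc : hA.cfc g = W * diagonal (fun i => g (ν i)) * star W := by
    rw [Matrix.IsHermitian.cfc, ← hν, hco, Unitary.conjStarAlgAut_apply]
  rw [hcfc, ← hkey]
  conv_rhs => rw [hVWP, StarMul.star_mul]
  simp only [mul_assoc]

lemma matLog_conj (hV1 : star V * V = 1) (hV2 : V * star V = 1) (d : Fin n → ℝ) :
    matLog (V * diagonal d * star V) = V * diagonal (fun i => Real.log (d i)) * star V := by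
  rw [matLog, dif_pos (conj_herm d)]
  exact cfc_conj hV1 hV2 d (conj_herm d) Real.log

lemma posdef_conj {A : Matrix (Fin n) (Fin n) ℝ} (hA : A.PosDef)
    (hV1 : star V * V = 1) : (star V * A * V).PosDef := by
  rw [star_eq_conjTranspose]
  refine PosDef.of_dotProduct_mulVec_pos ?_ ?_
  · exact isHermitian_conjTranspose_mul_mul V hA.1
  · intro x hx
    have hVx : V *ᵥ x ≠ 0 := by
      intro h
      apply hx
      calc x = 1 *ᵥ x := (one_mulVec x).symm
        _ = (star V * V) *ᵥ x := by rw [hV1]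
        _ = star V *ᵥ (V *ᵥ x) := by rw [← mulVec_mulVec]
        _ = 0 := by rw [h, mulVec_zero]
    have h2 := hA.dotProduct_mulVec_pos hVx
    simpa only [star_mulVec, dotProduct_mulVec, vecMul_vecMul] using h2

lemma sum_sq_col {P : Matrix (Fin n) (Fin n) ℝ} (hP1 : star P * P = 1) (j : Fin n) :
    ∑ i, (P i j) ^ 2 = 1 := by
  have h := congrFun (congrFun hP1 j) j
  rw [mul_apply] at h
  have h1 : ((1 : Matrix (Fin n) (Fin n) ℝ)) j j = 1 := one_apply_eq j
  rw [h1] at h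
  rw [← h]
  refine Finset.sum_congr rfl fun i _ => ?_
  simp [Matrix.star_apply, sq]

lemma sum_sq_row {P : Matrix (Fin n) (Fin n) ℝ} (hP2 : P * star P = 1) (i : Fin n) :
    ∑ j, (P i j) ^ 2 = 1 := by
  have h := congrFun (congrFun hP2 i) i
  rw [mul_apply] at h
  have h1 : ((1 : Matrix (Fin n) (Fin n) ℝ)) i i = 1 := one_apply_eq i
  rw [h1] at h
  rw [← h]
  refine Finset.sum_congr rfl fun j _ => ?_
  simp [Matrix.star_apply, sq]

lemma trace_conj_conj {U : Matrix (Fin n) (Fin n) ℝ} (hU1 : star U * U = 1)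
    (hU2 : U * star U = 1) (hV1 : star V * V = 1) (hV2 : V * star V = 1) (a b : Fin n → ℝ) :
    ((U * diagonal a * star U) * (V * diagonal b * star V)).trace
      = ∑ i, ∑ j, a i * b j * ((star U * V) i j) ^ 2 := by
  set P : Matrix (Fin n) (Fin n) ℝ := star U * V with hP
  have hmat : (U * diagonal a * star U) * (V * diagonal b * star V)
      = U * (diagonal a * P * diagonal b * star P) * star U := by
    have hsP : star P = star V * U := by rw [hP, StarMul.star_mul, star_star]
    rw [hsP, hP]
    simp only [mul_assoc]
    rw [hU2, mul_one]
  rw [hmat, trace_mul_cycle, ← mul_assoc, hU1, one_mul]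
  have hsplit : diagonal a * P * diagonal b * star P
      = (diagonal a * P) * (diagonal b * star P) := by simp only [mul_assoc]
  rw [hsplit, Matrix.trace]
  simp only [diag_apply, mul_apply, diagonal_mul, Matrix.star_apply, star_trivial]
  refine Finset.sum_congr rfl fun i _ => Finset.sum_congr rfl fun j _ => ?_
  simp only [diagonal_apply, ite_mul, zero_mul, Finset.sum_ite_eq, Finset.mem_univ, if_true]
  ring

end Conj


lemma herm_decomp {n : ℕ} {A : Matrix (Fin n) (Fin n) ℝ} (hA : A.IsHermitian) :
    ∃ V : Matrix (Fin n) (Fin n) ℝ, star V * V = 1 ∧ V * star V = 1 ∧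
      A = V * diagonal (hA.eigenvalues) * star V := by
  refine ⟨(Matrix.IsHermitian.eigenvectorUnitary hA : Matrix (Fin n) (Fin n) ℝ), ?_, ?_, ?_⟩
  · simpa using Unitary.star_mul_self_of_mem (SetLike.coe_mem
      (Matrix.IsHermitian.eigenvectorUnitary hA))
  · simpa using Unitary.mul_star_self_of_mem (SetLike.coe_mem
      (Matrix.IsHermitian.eigenvectorUnitary hA))
  · conv_lhs => rw [hA.spectral_theorem, Unitary.conjStarAlgAut_apply]
    rw [show (RCLike.ofReal ∘ hA.eigenvalues : Fin n → ℝ) = hA.eigenvalues from by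
      funext i; simp [RCLike.ofReal_real_eq_id]]

end BEM

/-- The minimizer over symmetric matrices `X` with `0 ≺ X ≺ I` of
`Tr[HX] + β⁻¹ (Tr[X log X] + Tr[(I−X) log(I−X)])` is `X = (I + exp(βH))⁻¹`,
with minimum value `−β⁻¹ Tr[log(I + exp(−βH))]`. -/
theorem binary_entropic_min {n : ℕ} (H : Matrix (Fin n) (Fin n) ℝ) (hH : H.IsHermitian)
    (β : ℝ) (hβ : 0 < β)
    (f : Matrix (Fin n) (Fin n) ℝ → ℝ)
    (hf : ∀ X, f X = (H * X).trace +
      β⁻¹ * ((X * matLog X).trace + ((1 - X) * matLog (1 - X)).trace)) :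
    f ((1 + NormedSpace.exp (β • H))⁻¹) =
      -β⁻¹ * (matLog (1 + NormedSpace.exp ((-β) • H))).trace ∧
    ∀ X : Matrix (Fin n) (Fin n) ℝ, X.PosDef → (1 - X).PosDef →
      (-β⁻¹ * (matLog (1 + NormedSpace.exp ((-β) • H))).trace ≤ f X ∧
        (X ≠ (1 + NormedSpace.exp (β • H))⁻¹ →
          -β⁻¹ * (matLog (1 + NormedSpace.exp ((-β) • H))).trace < f X)) := by
  obtain ⟨U, hU1, hU2, hHd⟩ := BEM.herm_decomp hH
  set μ : Fin n → ℝ := hH.eigenvalues with hμdef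
  set y : Fin n → ℝ := fun i => (1 + Real.exp (β * μ i))⁻¹ with hy
  have hOne : (1 : Matrix (Fin n) (Fin n) ℝ) = U * diagonal (fun _ => (1:ℝ)) * star U :=
    (BEM.conj_one hU2).symm
  have hE : NormedSpace.exp (β • H)
      = U * diagonal (fun i => Real.exp (β * μ i)) * star U := by
    rw [hHd, BEM.conj_smul, BEM.conj_exp hU1 hU2]
  have hA1 : 1 + NormedSpace.exp (β • H)
      = U * diagonal (fun i => 1 + Real.exp (β * μ i)) * star U := by
    rw [hE]
    conv_lhs => rw [hOne]
    exact BEM.conj_add _ _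
  have hXstar : (1 + NormedSpace.exp (β • H))⁻¹ = U * diagonal y * star U := by
    rw [hA1, BEM.conj_inv hU1 hU2 (fun i => (BEM.one_add_exp_pos _).ne')]
  have hsmn : (-β) • H = U * diagonal (fun i => -(β * μ i)) * star U := by
    rw [hHd, BEM.conj_smul]
    simp only [neg_mul]
  have hEn : NormedSpace.exp ((-β) • H)
      = U * diagonal (fun i => Real.exp (-(β * μ i))) * star U := by
    rw [hsmn, BEM.conj_exp hU1 hU2]
  have hA2 : 1 + NormedSpace.exp ((-β) • H)
      = U * diagonal (fun i => 1 + Real.exp (-(β * μ i))) * star U := by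
    rw [hEn]
    conv_lhs => rw [hOne]
    exact BEM.conj_add _ _
  have hRHStr : (matLog (1 + NormedSpace.exp ((-β) • H))).trace
      = ∑ i, Real.log (1 + Real.exp (-(β * μ i))) := by
    rw [hA2, BEM.matLog_conj hU1 hU2, BEM.conj_trace hU1]
  have hy0 : ∀ i, 0 < y i := fun i => BEM.yy_pos β (μ i)
  have hy1 : ∀ i, y i < 1 := fun i => BEM.yy_lt_one β (μ i)
  -- value at the minimizer
  have h1mXs : 1 - (1 + NormedSpace.exp (β • H))⁻¹
      = U * diagonal (fun i => 1 - y i) * star U := by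
    rw [hXstar]
    conv_lhs => rw [hOne]
    exact BEM.conj_sub _ _
  have hlogXs : matLog ((1 + NormedSpace.exp (β • H))⁻¹)
      = U * diagonal (fun i => Real.log (y i)) * star U := by
    rw [hXstar, BEM.matLog_conj hU1 hU2]
  have hlog1m : matLog (1 - (1 + NormedSpace.exp (β • H))⁻¹)
      = U * diagonal (fun i => Real.log (1 - y i)) * star U := by
    rw [h1mXs, BEM.matLog_conj hU1 hU2]
  have hval : f ((1 + NormedSpace.exp (β • H))⁻¹)
      = -β⁻¹ * ∑ i, Real.log (1 + Real.exp (-(β * μ i))) := by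
    rw [hf, hlogXs, hlog1m, h1mXs, hXstar, hHd]
    rw [BEM.conj_mul_conj hU1, BEM.conj_mul_conj hU1, BEM.conj_mul_conj hU1,
      BEM.conj_trace hU1, BEM.conj_trace hU1, BEM.conj_trace hU1]
    calc (∑ i, μ i * y i)
        + β⁻¹ * ((∑ i, y i * Real.log (y i)) + ∑ i, (1 - y i) * Real.log (1 - y i))
        = ∑ i, (μ i * y i + β⁻¹ * (y i * Real.log (y i)
            + (1 - y i) * Real.log (1 - y i))) := by
          rw [← Finset.sum_add_distrib, Finset.mul_sum, ← Finset.sum_add_distrib]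
      _ = ∑ i, -β⁻¹ * Real.log (1 + Real.exp (-(β * μ i))) :=
          Finset.sum_congr rfl fun i _ => BEM.scalar_value hβ (μ i)
      _ = -β⁻¹ * ∑ i, Real.log (1 + Real.exp (-(β * μ i))) := (Finset.mul_sum _ _ _).symm
  refine ⟨by rw [hval, hRHStr], ?_⟩
  intro X hX hX'
  obtain ⟨V, hV1, hV2, hXd⟩ := BEM.herm_decomp hX.1
  set x : Fin n → ℝ := hX.1.eigenvalues with hxdef
  have hx0 : ∀ j, 0 < x j := fun j => hX.eigenvalues_pos j
  have hOneV : (1 : Matrix (Fin n) (Fin n) ℝ) = V * diagonal (fun _ => (1:ℝ)) * star V :=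
    (BEM.conj_one hV2).symm
  have h1mX : 1 - X = V * diagonal (fun j => 1 - x j) * star V := by
    rw [hXd]
    conv_lhs => rw [hOneV]
    exact BEM.conj_sub _ _
  have hx1 : ∀ j, x j < 1 := by
    have hpd := BEM.posdef_conj hX' hV1
    rw [h1mX, BEM.conj_cancel hV1] at hpd
    intro j
    have := (Matrix.posDef_diagonal_iff.mp hpd) j
    linarith
  set P : Matrix (Fin n) (Fin n) ℝ := star U * V with hPdef
  have hP1 : star P * P = 1 := by
    rw [hPdef, StarMul.star_mul, star_star]
    calc star V * U * (star U * V) = star V * (U * star U) * V := by simp only [mul_assoc]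
      _ = 1 := by rw [hU2, mul_one, hV1]
  have hP2 : P * star P = 1 := by
    rw [hPdef, StarMul.star_mul, star_star]
    calc star U * V * (star V * U) = star U * (V * star V) * U := by simp only [mul_assoc]
      _ = 1 := by rw [hV2, mul_one, hU1]
  have t1 : (H * X).trace = ∑ i, ∑ j, μ i * x j * (P i j) ^ 2 := by
    rw [hHd, hXd]
    exact BEM.trace_conj_conj hU1 hU2 hV1 hV2 μ x
  have t2 : (X * matLog X).trace = ∑ j, x j * Real.log (x j) := by
    rw [hXd, BEM.matLog_conj hV1 hV2, BEM.conj_mul_conj hV1, BEM.conj_trace hV1]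
  have t3 : ((1 - X) * matLog (1 - X)).trace
      = ∑ j, (1 - x j) * Real.log (1 - x j) := by
    rw [h1mX, BEM.matLog_conj hV1 hV2, BEM.conj_mul_conj hV1, BEM.conj_trace hV1]
  have S2 : ∑ j, x j * Real.log (x j)
      = ∑ i, ∑ j, (P i j) ^ 2 * (x j * Real.log (x j)) := by
    rw [Finset.sum_comm]
    refine Finset.sum_congr rfl fun j _ => ?_
    rw [← Finset.sum_mul, BEM.sum_sq_col hP1, one_mul]
  have S3 : ∑ j, (1 - x j) * Real.log (1 - x j)
      = ∑ i, ∑ j, (P i j) ^ 2 * ((1 - x j) * Real.log (1 - x j)) := by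
    rw [Finset.sum_comm]
    refine Finset.sum_congr rfl fun j _ => ?_
    rw [← Finset.sum_mul, BEM.sum_sq_col hP1, one_mul]
  have hfX : f X = ∑ i, ∑ j, (P i j) ^ 2 * (μ i * x j
      + β⁻¹ * (x j * Real.log (x j) + (1 - x j) * Real.log (1 - x j))) := by
    rw [hf, t1, t2, t3, S2, S3]
    simp only [Finset.mul_sum, ← Finset.sum_add_distrib]
    refine Finset.sum_congr rfl fun i _ => Finset.sum_congr rfl fun j _ => by ring
  have hGsum : -β⁻¹ * (matLog (1 + NormedSpace.exp ((-β) • H))).trace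
      = ∑ i, ∑ j, (P i j) ^ 2 * (-β⁻¹ * Real.log (1 + Real.exp (-(β * μ i)))) := by
    rw [hRHStr, Finset.mul_sum]
    refine Finset.sum_congr rfl fun i _ => ?_
    rw [← Finset.sum_mul, BEM.sum_sq_row hP2, one_mul]
  have hterm : ∀ i j, (P i j) ^ 2 * (-β⁻¹ * Real.log (1 + Real.exp (-(β * μ i))))
      ≤ (P i j) ^ 2 * (μ i * x j
        + β⁻¹ * (x j * Real.log (x j) + (1 - x j) * Real.log (1 - x j))) :=
    fun i j => mul_le_mul_of_nonneg_left (BEM.scalar_le hβ (μ i) (hx0 j) (hx1 j)) (sq_nonneg _)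
  constructor
  · rw [hGsum, hfX]
    exact Finset.sum_le_sum fun i _ => Finset.sum_le_sum fun j _ => hterm i j
  · intro hne
    have hVsP : V * star P = U := by
      rw [hPdef, StarMul.star_mul, star_star, ← mul_assoc, hV2, one_mul]
    have hPsV : P * star V = star U := by
      rw [hPdef, mul_assoc, hV2, mul_one]
    have hex : ∃ i j, P i j ≠ 0 ∧ x j ≠ y i := by
      by_contra hcon
      push_neg at hcon
      apply hne
      have key : star P * diagonal y * P = diagonal x := by
        ext j k
        simp only [mul_apply, mul_diagonal, Matrix.star_apply, star_trivial]
        have hstep : ∀ i, P i j * y i * P i k = P i j * x j * P i k := by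
          intro i
          rcases eq_or_ne (P i j) 0 with h | h
          · simp [h]
          · rw [hcon i j h]
        calc ∑ i, (∑ i', (star P) j i' * diagonal y i' i) * P i k
            = ∑ i, P i j * y i * P i k := by
              refine Finset.sum_congr rfl fun i _ => ?_
              simp only [diagonal_apply, Matrix.star_apply, star_trivial, mul_ite, mul_zero,
                Finset.sum_ite_eq, Finset.sum_ite_eq', Finset.mem_univ, if_true]
          _ = ∑ i, P i j * x j * P i k := Finset.sum_congr rfl fun i _ => hstep i
          _ = x j * ∑ i, P i j * P i k := by
              rw [Finset.mul_sum]
              exact Finset.sum_congr rfl fun i _ => by ring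
          _ = x j * (star P * P) j k := by
              simp [mul_apply, Matrix.star_apply, Finset.mul_sum]
          _ = diagonal x j k := by
              rw [hP1]
              rcases eq_or_ne j k with rfl | hjk
              · simp
              · simp [hjk, Matrix.one_apply_ne hjk]
      calc X = V * diagonal x * star V := hXd
        _ = V * (star P * diagonal y * P) * star V := by rw [key]
        _ = (V * star P) * diagonal y * (P * star V) := by simp only [mul_assoc]
        _ = U * diagonal y * star U := by rw [hVsP, hPsV]
        _ = (1 + NormedSpace.exp (β • H))⁻¹ := hXstar.symm
    obtain ⟨i0, j0, hPne, hxy⟩ := hex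
    rw [hGsum, hfX]
    refine Finset.sum_lt_sum (fun i _ => Finset.sum_le_sum fun j _ => hterm i j)
      ⟨i0, Finset.mem_univ _, ?_⟩
    refine Finset.sum_lt_sum (fun j _ => hterm i0 j) ⟨j0, Finset.mem_univ _, ?_⟩
    have hc : 0 < (P i0 j0) ^ 2 := (sq_nonneg _).lt_of_ne (Ne.symm (pow_ne_zero 2 hPne))
    exact mul_lt_mul_of_pos_left (BEM.scalar_lt hβ (μ i0) (hx0 j0) (hx1 j0) hxy) hc
end

section
/- The function g(λ) = b·λ − β⁻¹ Tr[exp(−β(C − λ·A))] on ℝ^m is concave, where λ·A = Σᵢ λᵢ Aᵢ for symmetric matrices A₁,…,A_m. -/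
open Matrix NormedSpace

section Aux

variable {n : ℕ}

private lemma herm_smul (r : ℝ) {X : Matrix (Fin n) (Fin n) ℝ} (hX : X.IsHermitian) :
    (r • X).IsHermitian := by
  unfold Matrix.IsHermitian
  rw [Matrix.conjTranspose_smul, hX.eq]
  simp

private lemma herm_sum {m : ℕ} (A : Fin m → Matrix (Fin n) (Fin n) ℝ)
    (hA : ∀ i, (A i).IsHermitian) : (∑ i, A i).IsHermitian := by
  unfold Matrix.IsHermitian
  rw [Matrix.conjTranspose_sum]
  exact Finset.sum_congr rfl fun i _ => (hA i).eq

private lemma conj_diag_apply (W : Matrix (Fin n) (Fin n) ℝ) (f : Fin n → ℝ) (i : Fin n) :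
    (star W * diagonal f * W) i i = ∑ j, f j * (W j i) ^ 2 := by
  simp [Matrix.mul_apply, Matrix.diagonal, star, conjTranspose_apply, Finset.mul_sum, sq]
  congr 1
  ext j
  ring

private lemma exp_hermitian_eq {X : Matrix (Fin n) (Fin n) ℝ} (hX : X.IsHermitian) :
    exp X = (hX.eigenvectorUnitary : Matrix (Fin n) (Fin n) ℝ)
      * diagonal (fun j => Real.exp (hX.eigenvalues j))
      * star (hX.eigenvectorUnitary : Matrix (Fin n) (Fin n) ℝ) := by
  set U : Matrix (Fin n) (Fin n) ℝ := (hX.eigenvectorUnitary : Matrix (Fin n) (Fin n) ℝ)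
    with hUdef
  have hUmem : U ∈ Matrix.unitaryGroup (Fin n) ℝ := hX.eigenvectorUnitary.2
  have hU1 : star U * U = 1 := hUmem.1
  have hinv : U⁻¹ = star U := Matrix.inv_eq_left_inv hU1
  have hunit : IsUnit U := ⟨Unitary.toUnits hX.eigenvectorUnitary, rfl⟩
  conv_lhs => rw [hX.spectral_theorem, Unitary.conjStarAlgAut_apply, ← hUdef, ← hinv]
  rw [Matrix.exp_conj U _ hunit, hinv, Matrix.exp_diagonal, Pi.exp_def]
  congr 2
  funext j
  simp [← Real.exp_eq_exp_ℝ]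

/-- Peierls-type inequality: `exp ((Uᴴ X U)ᵢᵢ) ≤ (Uᴴ (exp X) U)ᵢᵢ` for unitary `U`. -/
private lemma peierls {X : Matrix (Fin n) (Fin n) ℝ} (hX : X.IsHermitian)
    (U : Matrix (Fin n) (Fin n) ℝ) (hU : star U * U = 1) (i : Fin n) :
    Real.exp ((star U * X * U) i i) ≤ (star U * exp X * U) i i := by
  set V : Matrix (Fin n) (Fin n) ℝ := (hX.eigenvectorUnitary : Matrix (Fin n) (Fin n) ℝ) with hV
  have hVmem : V ∈ Matrix.unitaryGroup (Fin n) ℝ := hX.eigenvectorUnitary.2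
  set W : Matrix (Fin n) (Fin n) ℝ := star V * U with hW
  have hWW : star W * W = 1 := by
    have hVV : V * star V = 1 := hVmem.2
    calc star W * W = star U * (V * star V) * U := by
          rw [hW]
          rw [StarMul.star_mul, star_star]
          simp [Matrix.mul_assoc]
      _ = 1 := by rw [hVV, Matrix.mul_one, hU]
  have hsum : ∑ j, (W j i) ^ 2 = 1 := by
    have := congrArg (fun M => M i i) hWW
    simpa [Matrix.mul_apply, star, conjTranspose_apply, sq, Matrix.one_apply] using this
  have hXc : star U * X * U = star W * diagonal hX.eigenvalues * W := by
    conv_lhs => rw [hX.spectral_theorem, Unitary.conjStarAlgAut_apply, ← hV]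
    have h0 : RCLike.ofReal ∘ hX.eigenvalues = hX.eigenvalues := by ext j; simp
    rw [h0, hW, StarMul.star_mul, star_star]
    simp [Matrix.mul_assoc]
  have hEc : star U * exp X * U
      = star W * diagonal (fun j => Real.exp (hX.eigenvalues j)) * W := by
    rw [exp_hermitian_eq hX, ← hV, hW, StarMul.star_mul, star_star]
    simp [Matrix.mul_assoc]
  rw [hXc, hEc, conj_diag_apply, conj_diag_apply]
  have hjensen := convexOn_exp.map_sum_le (t := Finset.univ)
    (w := fun j => (W j i) ^ 2) (p := fun j => hX.eigenvalues j)
    (fun j _ => sq_nonneg _) hsum (fun j _ => Set.mem_univ _)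
  calc Real.exp (∑ j, hX.eigenvalues j * (W j i) ^ 2)
      = Real.exp (∑ j, (W j i) ^ 2 • hX.eigenvalues j) := by
        congr 1; apply Finset.sum_congr rfl; intro j _; simp [mul_comm]
    _ ≤ ∑ j, (W j i) ^ 2 • Real.exp (hX.eigenvalues j) := hjensen
    _ = ∑ j, Real.exp (hX.eigenvalues j) * (W j i) ^ 2 := by
        apply Finset.sum_congr rfl; intro j _; simp [mul_comm]

private lemma conj_trace_eq (U M : Matrix (Fin n) (Fin n) ℝ)
    (hU : U * star U = 1) : (star U * M * U).trace = M.trace := by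
  rw [Matrix.trace_mul_cycle, hU, Matrix.one_mul]

/-- Convexity of `X ↦ Tr exp X` on Hermitian matrices. -/
private lemma trace_exp_convex {X Y : Matrix (Fin n) (Fin n) ℝ}
    (hX : X.IsHermitian) (hY : Y.IsHermitian) {a c : ℝ}
    (ha : 0 ≤ a) (hc : 0 ≤ c) (hac : a + c = 1) :
    (exp (a • X + c • Y)).trace ≤ a * (exp X).trace + c * (exp Y).trace := by
  set H : Matrix (Fin n) (Fin n) ℝ := a • X + c • Y with hHdef
  have hH : H.IsHermitian := (herm_smul a hX).add (herm_smul c hY)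
  set U : Matrix (Fin n) (Fin n) ℝ := (hH.eigenvectorUnitary : Matrix (Fin n) (Fin n) ℝ)
    with hUdef
  have hUmem : U ∈ Matrix.unitaryGroup (Fin n) ℝ := hH.eigenvectorUnitary.2
  have hU1 : star U * U = 1 := hUmem.1
  have hU2 : U * star U = 1 := hUmem.2
  -- trace exp H = ∑ exp μ
  have htr : (exp H).trace = ∑ i, Real.exp (hH.eigenvalues i) := by
    rw [exp_hermitian_eq hH, ← hUdef, Matrix.trace_mul_cycle, hU1,
      Matrix.one_mul, Matrix.trace_diagonal]
  have hdiag : star U * H * U = diagonal (RCLike.ofReal ∘ hH.eigenvalues) := by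
    have hs := hH.spectral_theorem
    rw [Unitary.conjStarAlgAut_apply, ← hUdef] at hs
    calc star U * H * U
        = star U * (U * diagonal (RCLike.ofReal ∘ hH.eigenvalues) * star U) * U := by
          rw [← hs]
      _ = diagonal (RCLike.ofReal ∘ hH.eigenvalues) := by
          simp only [← Matrix.mul_assoc, hU1, Matrix.one_mul]
          rw [Matrix.mul_assoc, hU1, Matrix.mul_one]
  have hmu : ∀ i, hH.eigenvalues i = (star U * H * U) i i := by
    intro i; rw [hdiag]; simp
  have hsplit : ∀ i, (star U * H * U) i i
      = a * (star U * X * U) i i + c * (star U * Y * U) i i := by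
    intro i
    have h : star U * H * U = a • (star U * X * U) + c • (star U * Y * U) := by
      rw [hHdef]
      simp [Matrix.mul_add, Matrix.add_mul, Matrix.mul_smul, Matrix.smul_mul]
    rw [h]; simp
  have key : ∀ i, Real.exp (hH.eigenvalues i)
      ≤ a * (star U * exp X * U) i i + c * (star U * exp Y * U) i i := by
    intro i
    rw [hmu i, hsplit i]
    calc Real.exp (a * (star U * X * U) i i + c * (star U * Y * U) i i)
        ≤ a * Real.exp ((star U * X * U) i i) + c * Real.exp ((star U * Y * U) i i) := by
          have := convexOn_exp.2 (Set.mem_univ ((star U * X * U) i i))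
            (Set.mem_univ ((star U * Y * U) i i)) ha hc hac
          simpa using this
      _ ≤ a * (star U * exp X * U) i i + c * (star U * exp Y * U) i i := by
          gcongr
          · exact peierls hX U hU1 i
          · exact peierls hY U hU1 i
  calc (exp H).trace = ∑ i, Real.exp (hH.eigenvalues i) := htr
    _ ≤ ∑ i, (a * (star U * exp X * U) i i + c * (star U * exp Y * U) i i) :=
        Finset.sum_le_sum fun i _ => key i
    _ = a * (star U * exp X * U).trace + c * (star U * exp Y * U).trace := by
        rw [Finset.sum_add_distrib, ← Finset.mul_sum, ← Finset.mul_sum]; rfl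
    _ = a * (exp X).trace + c * (exp Y).trace := by
        rw [conj_trace_eq U _ hU2, conj_trace_eq U _ hU2]

end Aux

/-- The dual function `g(λ) = b·λ − β⁻¹ Tr[exp(−β(C − λ·A))]` is concave on `ℝ^m`. -/
theorem dual_concave {n m : ℕ} (C : Matrix (Fin n) (Fin n) ℝ) (hC : C.IsHermitian)
    (A : Fin m → Matrix (Fin n) (Fin n) ℝ) (hA : ∀ i, (A i).IsHermitian)
    (b : Fin m → ℝ) (β : ℝ) (hβ : 0 < β) :
    ConcaveOn ℝ Set.univ (fun l : Fin m → ℝ =>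
      b ⬝ᵥ l - β⁻¹ * (NormedSpace.exp ((-β) • (C - ∑ i, l i • A i))).trace) := by
  set M : (Fin m → ℝ) → Matrix (Fin n) (Fin n) ℝ :=
    fun l => (-β) • (C - ∑ i, l i • A i) with hM
  have hMH : ∀ l, (M l).IsHermitian :=
    fun l => herm_smul (-β) (hC.sub (herm_sum _ fun i => herm_smul (l i) (hA i)))
  refine ⟨convex_univ, ?_⟩
  intro x _ y _ a c ha hc hac
  simp only [Set.mem_univ, smul_eq_mul]
  have haff : M (a • x + c • y) = a • M x + c • M y := by
    rw [hM]
    simp only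
    have h1 : (∑ i, (a • x + c • y) i • A i)
        = a • (∑ i, x i • A i) + c • (∑ i, y i • A i) := by
      rw [Finset.smul_sum, Finset.smul_sum, ← Finset.sum_add_distrib]
      apply Finset.sum_congr rfl
      intro i _
      simp [Pi.add_apply, Pi.smul_apply, add_smul, smul_smul]
    rw [h1]
    have h2 : C - (a • (∑ i, x i • A i) + c • (∑ i, y i • A i))
        = a • (C - ∑ i, x i • A i) + c • (C - ∑ i, y i • A i) := by
      nth_rewrite 1 [show C = (a + c) • C by rw [hac, one_smul]]
      module
    rw [h2, smul_add, smul_comm, smul_comm (-β) c]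
  have hkey : (exp (M (a • x + c • y))).trace
      ≤ a * (exp (M x)).trace + c * (exp (M y)).trace := by
    rw [haff]
    exact trace_exp_convex (hMH x) (hMH y) ha hc hac
  have hdot : b ⬝ᵥ (a • x + c • y) = a * (b ⬝ᵥ x) + c * (b ⬝ᵥ y) := by
    rw [dotProduct_add, dotProduct_smul, dotProduct_smul]; simp
  have hβinv : (0:ℝ) < β⁻¹ := inv_pos.mpr hβ
  calc a * (b ⬝ᵥ x - β⁻¹ * (exp (M x)).trace) + c * (b ⬝ᵥ y - β⁻¹ * (exp (M y)).trace)
      = (a * (b ⬝ᵥ x) + c * (b ⬝ᵥ y))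
        - β⁻¹ * (a * (exp (M x)).trace + c * (exp (M y)).trace) := by ring
    _ ≤ b ⬝ᵥ (a • x + c • y) - β⁻¹ * (exp (M (a • x + c • y))).trace := by
        rw [hdot]
        have := mul_le_mul_of_nonneg_left hkey (le_of_lt hβinv)
        linarith
end

section
/- The gradient of g(λ) = b·λ − β⁻¹ Tr[exp(−β(C − λ·A))] is ∇g(λ) = b − (Tr[Aᵢ exp(−β(C − λ·A))])_{i=1,…,m}. -/
open Matrix

section aux

open scoped Matrix.Norms.Operator

variable {n : ℕ}

noncomputable local instance matTopLinfty : TopologicalSpace (Matrix (Fin n) (Fin n) ℝ) :=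
  PseudoMetricSpace.toUniformSpace.toTopologicalSpace

noncomputable def traceCLM (n : ℕ) : Matrix (Fin n) (Fin n) ℝ →L[ℝ] ℝ :=
  LinearMap.toContinuousLinearMap (Matrix.traceLinearMap (Fin n) ℝ ℝ)

@[simp] lemma traceCLM_apply (X : Matrix (Fin n) (Fin n) ℝ) : traceCLM n X = X.trace := rfl

noncomputable def lmulCLM (a : Matrix (Fin n) (Fin n) ℝ) :
    Matrix (Fin n) (Fin n) ℝ →L[ℝ] Matrix (Fin n) (Fin n) ℝ :=
  LinearMap.toContinuousLinearMap (LinearMap.mulLeft ℝ a)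

noncomputable def rmulCLM (a : Matrix (Fin n) (Fin n) ℝ) :
    Matrix (Fin n) (Fin n) ℝ →L[ℝ] Matrix (Fin n) (Fin n) ℝ :=
  LinearMap.toContinuousLinearMap (LinearMap.mulRight ℝ a)

@[simp] lemma lmulCLM_apply (a X : Matrix (Fin n) (Fin n) ℝ) : lmulCLM a X = a * X := rfl
@[simp] lemma rmulCLM_apply (a X : Matrix (Fin n) (Fin n) ℝ) : rmulCLM a X = X * a := rfl

lemma norm_rmulCLM_le (a : Matrix (Fin n) (Fin n) ℝ) : ‖rmulCLM a‖ ≤ ‖a‖ :=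
  ContinuousLinearMap.opNorm_le_bound _ (norm_nonneg a) fun H => by
    rw [rmulCLM_apply, mul_comm ‖a‖]; exact norm_mul_le H a

lemma norm_one_pow_le (a : Matrix (Fin n) (Fin n) ℝ) (j : ℕ) :
    ‖a ^ j‖ ≤ ‖(1 : Matrix (Fin n) (Fin n) ℝ)‖ * ‖a‖ ^ j := by
  induction j with
  | zero => rw [pow_zero, pow_zero, mul_one]
  | succ j ih =>
    calc ‖a ^ (j + 1)‖ = ‖a ^ j * a‖ := by rw [pow_succ]
    _ ≤ ‖a ^ j‖ * ‖a‖ := norm_mul_le _ _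
    _ ≤ ‖(1 : Matrix (Fin n) (Fin n) ℝ)‖ * ‖a‖ ^ j * ‖a‖ :=
        mul_le_mul_of_nonneg_right ih (norm_nonneg a)
    _ = ‖(1 : Matrix (Fin n) (Fin n) ℝ)‖ * ‖a‖ ^ (j + 1) := by ring

lemma hasFDerivAt_pow_mat (k : ℕ) (X : Matrix (Fin n) (Fin n) ℝ) :
    HasFDerivAt (fun Y : Matrix (Fin n) (Fin n) ℝ => Y ^ k)
      (∑ j ∈ Finset.range k, (lmulCLM (X ^ j)).comp (rmulCLM (X ^ (k - 1 - j)))) X := by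
  induction k with
  | zero => simpa using hasFDerivAt_const (1 : Matrix (Fin n) (Fin n) ℝ) X
  | succ k ih =>
    have h := ih.mul' (hasFDerivAt_id X)
    have h2 : HasFDerivAt (fun Y : Matrix (Fin n) (Fin n) ℝ => Y ^ (k + 1))
        (X ^ k • ContinuousLinearMap.id ℝ _ +
          (∑ j ∈ Finset.range k,
            (lmulCLM (X ^ j)).comp (rmulCLM (X ^ (k - 1 - j)))).smulRight X) X := by
      convert h using 1
      case e'_11 => exact funext fun Y => pow_succ Y k
      case e'_12 => exact ContinuousLinearMap.ext fun H => rfl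
      all_goals rfl
    refine h2.congr_fderiv ?_
    refine ContinuousLinearMap.ext fun H => ?_
    simp only [ContinuousLinearMap.add_apply, ContinuousLinearMap.coe_sum', Finset.sum_apply,
      ContinuousLinearMap.comp_apply, lmulCLM_apply, rmulCLM_apply,
      ContinuousLinearMap.smulRight_apply, ContinuousLinearMap.smul_apply,
      ContinuousLinearMap.id_apply, smul_eq_mul]
    rw [eq_comm]
    rw [Finset.sum_range_succ]
    rw [Nat.add_sub_cancel, Nat.sub_self, pow_zero, mul_one, add_comm, Finset.sum_mul]
    congr 1
    refine Finset.sum_congr rfl fun j hj => ?_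
    have hj' : j < k := Finset.mem_range.mp hj
    have he : k - 1 - j + 1 = k - j := by omega
    rw [mul_assoc (X ^ j), mul_assoc H, ← pow_succ, he]

noncomputable def termCLM (X : Matrix (Fin n) (Fin n) ℝ) (k : ℕ) :
    Matrix (Fin n) (Fin n) ℝ →L[ℝ] ℝ :=
  ((k : ℝ) * (k.factorial : ℝ)⁻¹) • (traceCLM n).comp (rmulCLM (X ^ (k - 1)))

lemma hasFDerivAt_term (k : ℕ) (X : Matrix (Fin n) (Fin n) ℝ) :
    HasFDerivAt (fun Y : Matrix (Fin n) (Fin n) ℝ => (k.factorial : ℝ)⁻¹ • (Y ^ k).trace)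
      (termCLM X k) X := by
  have h := ((traceCLM n).hasFDerivAt.comp X (hasFDerivAt_pow_mat k X)).const_smul
    ((k.factorial : ℝ)⁻¹)
  refine h.congr_fderiv ?_
  refine ContinuousLinearMap.ext fun H => ?_
  have hterm : ∀ j ∈ Finset.range k,
      (X ^ j * (H * X ^ (k - 1 - j))).trace = (H * X ^ (k - 1)).trace := by
    intro j hj
    have hj' : j < k := Finset.mem_range.mp hj
    have he : k - 1 - j + j = k - 1 := by omega
    rw [Matrix.trace_mul_comm, mul_assoc, ← pow_add, he]
  simp only [termCLM, ContinuousLinearMap.smul_apply, ContinuousLinearMap.comp_apply,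
    traceCLM_apply, rmulCLM_apply, ContinuousLinearMap.coe_sum', Finset.sum_apply,
    lmulCLM_apply, Matrix.trace_sum, smul_eq_mul]
  rw [Finset.sum_congr rfl hterm, Finset.sum_const, Finset.card_range, nsmul_eq_mul]
  ring

lemma norm_termCLM_le (k : ℕ) (X : Matrix (Fin n) (Fin n) ℝ) :
    ‖termCLM X k‖ ≤
      ‖traceCLM n‖ * ‖(1 : Matrix (Fin n) (Fin n) ℝ)‖ *
        ((k : ℝ) * (k.factorial : ℝ)⁻¹ * ‖X‖ ^ (k - 1)) := by
  have hknn : (0:ℝ) ≤ (k : ℝ) * (k.factorial : ℝ)⁻¹ := by positivity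
  calc ‖termCLM X k‖ ≤ (k : ℝ) * (k.factorial : ℝ)⁻¹ *
        ‖(traceCLM n).comp (rmulCLM (X ^ (k - 1)))‖ := by
        rw [termCLM]
        refine (norm_smul_le ((k : ℝ) * (k.factorial : ℝ)⁻¹)
          ((traceCLM n).comp (rmulCLM (X ^ (k - 1))))).trans (le_of_eq ?_)
        rw [Real.norm_eq_abs, abs_of_nonneg hknn]
    _ ≤ (k : ℝ) * (k.factorial : ℝ)⁻¹ * (‖traceCLM n‖ * ‖rmulCLM (X ^ (k - 1))‖) :=
        mul_le_mul_of_nonneg_left (ContinuousLinearMap.opNorm_comp_le _ _) hknn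
    _ ≤ (k : ℝ) * (k.factorial : ℝ)⁻¹ * (‖traceCLM n‖ *
          (‖(1 : Matrix (Fin n) (Fin n) ℝ)‖ * ‖X‖ ^ (k - 1))) := by
        refine mul_le_mul_of_nonneg_left ?_ hknn
        exact mul_le_mul_of_nonneg_left
          ((norm_rmulCLM_le _).trans (norm_one_pow_le X (k - 1))) (norm_nonneg _)
    _ = ‖traceCLM n‖ * ‖(1 : Matrix (Fin n) (Fin n) ℝ)‖ *
        ((k : ℝ) * (k.factorial : ℝ)⁻¹ * ‖X‖ ^ (k - 1)) := by ring

theorem hasFDerivAt_trace_exp (M : Matrix (Fin n) (Fin n) ℝ) :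
    HasFDerivAt (fun Y : Matrix (Fin n) (Fin n) ℝ => (NormedSpace.exp Y).trace)
      ((traceCLM n).comp (lmulCLM (NormedSpace.exp M))) M := by
  classical
  set R : ℝ := ‖M‖ + 1 with hR
  set c : ℝ := ‖traceCLM n‖ * ‖(1 : Matrix (Fin n) (Fin n) ℝ)‖ with hc
  have hcnn : 0 ≤ c := mul_nonneg (norm_nonneg _) (norm_nonneg _)
  set u : ℕ → ℝ := fun k => c * ((k : ℝ) * (k.factorial : ℝ)⁻¹ * R ^ (k - 1)) with hu_def
  have hfac : ∀ j : ℕ, ((j + 1 : ℕ) : ℝ) * (((j + 1).factorial : ℕ) : ℝ)⁻¹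
      = ((j.factorial : ℕ) : ℝ)⁻¹ := by
    intro j
    rw [Nat.factorial_succ]
    push_cast
    rw [mul_inv, ← mul_assoc, mul_inv_cancel₀ (by positivity), one_mul]
  have hu : Summable u := by
    have h0 : Summable (fun j : ℕ => c * (R ^ j / j.factorial)) :=
      (Real.summable_pow_div_factorial R).mul_left c
    have he : (fun j : ℕ => u (j + 1)) = fun j : ℕ => c * (R ^ j / j.factorial) := by
      funext j
      rw [hu_def]
      simp only [Nat.add_sub_cancel]
      rw [hfac j, div_eq_mul_inv]
      ring
    exact (summable_nat_add_iff 1).mp (he ▸ h0)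
  have hb : ∀ (k : ℕ) (X : Matrix (Fin n) (Fin n) ℝ), X ∈ Metric.ball M 1 →
      ‖termCLM X k‖ ≤ u k := by
    intro k X hX
    have hXR : ‖X‖ ≤ R := by
      have h1 : ‖X - M‖ < 1 := by rwa [mem_ball_iff_norm] at hX
      calc ‖X‖ = ‖M + (X - M)‖ := by rw [add_sub_cancel]
        _ ≤ ‖M‖ + ‖X - M‖ := norm_add_le _ _
        _ ≤ R := by rw [hR]; linarith
    refine (norm_termCLM_le k X).trans ?_
    rw [hu_def, hc]
    simp only
    gcongr
  have hf : ∀ (k : ℕ) (X : Matrix (Fin n) (Fin n) ℝ), X ∈ Metric.ball M 1 →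
      HasFDerivAt (fun Y : Matrix (Fin n) (Fin n) ℝ => (k.factorial : ℝ)⁻¹ • (Y ^ k).trace)
        (termCLM X k) X := fun k X _ => hasFDerivAt_term k X
  have hf0 : Summable fun k : ℕ => (k.factorial : ℝ)⁻¹ • ((M ^ k).trace) := by
    have h1 := (NormedSpace.expSeries_summable' (𝕂 := ℝ) M).map (traceCLM n)
      (traceCLM n).continuous
    simpa [Function.comp_def] using h1
  have key := hasFDerivAt_tsum_of_isPreconnected hu Metric.isOpen_ball
    (convex_ball M 1).isPreconnected hf hb (Metric.mem_ball_self one_pos) hf0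
    (Metric.mem_ball_self one_pos)
  have hfun : (fun Y : Matrix (Fin n) (Fin n) ℝ => (NormedSpace.exp Y).trace)
      = fun Y => ∑' k : ℕ, (k.factorial : ℝ)⁻¹ • ((Y ^ k).trace) := by
    funext Y
    have h1 := (NormedSpace.exp_series_hasSum_exp' (𝕂 := ℝ) Y).map (traceCLM n)
      (traceCLM n).continuous
    have h2 := h1.tsum_eq
    simpa [Function.comp_def] using h2.symm
  have hsum' : Summable fun k : ℕ => termCLM M k :=
    Summable.of_norm_bounded hu fun k => hb k M (Metric.mem_ball_self one_pos)
  have hder : (∑' k : ℕ, termCLM M k) = (traceCLM n).comp (lmulCLM (NormedSpace.exp M)) := by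
    refine ContinuousLinearMap.ext fun H => ?_
    have happ := hsum'.hasSum.map (ContinuousLinearMap.apply ℝ ℝ H)
      (ContinuousLinearMap.apply ℝ ℝ H).continuous
    simp only [Function.comp_def, ContinuousLinearMap.apply_apply] at happ
    rw [show (∑' k : ℕ, termCLM M k) H = ∑' k : ℕ, termCLM M k H from happ.tsum_eq.symm]
    have hexp2 : HasSum (fun j : ℕ => (j.factorial : ℝ)⁻¹ * ((M ^ j * H).trace))
        ((NormedSpace.exp M * H).trace) := by
      have h1 := (NormedSpace.exp_series_hasSum_exp' (𝕂 := ℝ) M).map (rmulCLM H)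
        (rmulCLM H).continuous
      have h2 := h1.map (traceCLM n) (traceCLM n).continuous
      simpa [Function.comp_def, smul_mul_assoc] using h2
    rw [ContinuousLinearMap.comp_apply, lmulCLM_apply, traceCLM_apply, ← hexp2.tsum_eq,
      Summable.tsum_eq_zero_add happ.summable]
    have h0 : termCLM M 0 H = 0 := by
      simp [termCLM]
    rw [h0, zero_add]
    refine tsum_congr fun j => ?_
    simp only [termCLM, ContinuousLinearMap.smul_apply, ContinuousLinearMap.comp_apply,
      traceCLM_apply, rmulCLM_apply, smul_eq_mul, Nat.add_sub_cancel]
    rw [hfac j, Matrix.trace_mul_comm]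
  rw [hfun]
  exact hder ▸ key

noncomputable def sumCLM (m n : ℕ) (A : Fin m → Matrix (Fin n) (Fin n) ℝ) :
    EuclideanSpace ℝ (Fin m) →L[ℝ] Matrix (Fin n) (Fin n) ℝ :=
  LinearMap.toContinuousLinearMap
    { toFun := fun l => ∑ i, l i • A i
      map_add' := fun x y => by
        simp [add_smul, Finset.sum_add_distrib]
      map_smul' := fun r x => by
        simp [smul_smul, Finset.smul_sum] }

@[simp] lemma sumCLM_apply (m : ℕ) (A : Fin m → Matrix (Fin n) (Fin n) ℝ)
    (l : EuclideanSpace ℝ (Fin m)) : sumCLM m n A l = ∑ i, l i • A i := rfl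

noncomputable def dotCLM (m : ℕ) (b : Fin m → ℝ) : EuclideanSpace ℝ (Fin m) →L[ℝ] ℝ :=
  LinearMap.toContinuousLinearMap
    { toFun := fun l => b ⬝ᵥ ⇑l
      map_add' := fun x y => by
        simp [dotProduct, mul_add, Finset.sum_add_distrib]
      map_smul' := fun r x => by
        simp [dotProduct, Finset.mul_sum, mul_comm, mul_left_comm] }

@[simp] lemma dotCLM_apply (m : ℕ) (b : Fin m → ℝ) (l : EuclideanSpace ℝ (Fin m)) :
    dotCLM m b l = b ⬝ᵥ ⇑l := rfl

end aux

/-- The gradient of `g(λ) = b·λ − β⁻¹ Tr[exp(−β(C − λ·A))]` is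
`∇g(λ) = b − (Tr[Aᵢ exp(−β(C − λ·A))])ᵢ`. -/
theorem dual_gradient {n m : ℕ} (C : Matrix (Fin n) (Fin n) ℝ) (hC : C.IsHermitian)
    (A : Fin m → Matrix (Fin n) (Fin n) ℝ) (hA : ∀ i, (A i).IsHermitian)
    (b : Fin m → ℝ) (β : ℝ) (hβ : 0 < β) (lam : EuclideanSpace ℝ (Fin m)) :
    HasGradientAt
      (fun l : EuclideanSpace ℝ (Fin m) =>
        b ⬝ᵥ ⇑l - β⁻¹ * (NormedSpace.exp ((-β) • (C - ∑ i, l i • A i))).trace)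
      (show EuclideanSpace ℝ (Fin m) from WithLp.toLp 2 fun i =>
        b i - (A i * NormedSpace.exp ((-β) • (C - ∑ j, lam j • A j))).trace)
      lam := by
  classical
  letI := Matrix.linftyOpNormedRing (α := ℝ) (n := Fin n)
  letI := Matrix.linftyOpNormedAlgebra (R := ℝ) (α := ℝ) (n := Fin n)
  set M : Matrix (Fin n) (Fin n) ℝ := (-β) • (C - ∑ j, lam j • A j) with hM
  have hL : HasFDerivAt (fun l : EuclideanSpace ℝ (Fin m) => (-β) • (C - ∑ i, l i • A i))
      (β • sumCLM m n A) lam := by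
    have h1 : (fun l : EuclideanSpace ℝ (Fin m) => (-β) • (C - ∑ i, l i • A i))
        = fun l => (β • sumCLM m n A) l + (-β) • C := by
      funext l
      rw [ContinuousLinearMap.smul_apply, sumCLM_apply, smul_sub]
      module
    rw [h1]
    exact ((β • sumCLM m n A).hasFDerivAt).add_const _
  have h2 := (hasFDerivAt_trace_exp M).comp lam hL
  have hB : HasFDerivAt (fun l : EuclideanSpace ℝ (Fin m) => b ⬝ᵥ ⇑l) (dotCLM m b) lam :=
    (dotCLM m b).hasFDerivAt
  have htotal := hB.sub (h2.const_mul β⁻¹)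
  rw [hasGradientAt_iff_hasFDerivAt]
  refine htotal.congr_fderiv ?_
  refine ContinuousLinearMap.ext fun v => ?_
  rw [InnerProductSpace.toDual_apply_apply, PiLp.inner_apply]
  simp only [RCLike.inner_apply, conj_trivial]
  have htr : (NormedSpace.exp M * (β • ∑ i, v i • A i)).trace
      = β * ∑ i, v i * ((A i * NormedSpace.exp M).trace) := by
    rw [Finset.smul_sum, Matrix.mul_sum, Matrix.trace_sum, Finset.mul_sum]
    refine Finset.sum_congr rfl fun i _ => ?_
    rw [smul_smul, mul_smul_comm, Matrix.trace_smul, Matrix.trace_mul_comm, smul_eq_mul]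
    ring
  simp only [ContinuousLinearMap.sub_apply, ContinuousLinearMap.smul_apply,
    ContinuousLinearMap.comp_apply, traceCLM_apply, lmulCLM_apply, dotCLM_apply,
    sumCLM_apply, smul_eq_mul]
  erw [htr]
  rw [← mul_assoc, inv_mul_cancel₀ hβ.ne', one_mul]
  simp only [dotProduct, sub_mul, mul_sub, Finset.sum_sub_distrib]
  congr 1
  exact Finset.sum_congr rfl fun i _ => mul_comm (b i) (v i)
end

section
/- Golden–Thompson inequality: for symmetric (Hermitian) matrices A and B, Tr[exp(A + B)] ≤ Tr[exp(A) exp(B)]. -/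
set_option maxHeartbeats 1000000
set_option linter.unusedVariables false
set_option linter.deprecated false

open Matrix

section GoldenThompsonAux

open Finset NormedSpace Nat
open scoped NNReal

variable {n : ℕ}

local notation "Mat" => Matrix (Fin n) (Fin n) ℝ

attribute [local instance] Matrix.linftyOpNormedAddCommGroup Matrix.linftyOpNormedRing
  Matrix.linftyOpNormedAlgebra

lemma trace_transpose_mul (C D : Mat) :
    (Cᵀ * D).trace = ∑ p : Fin n × Fin n, C p.1 p.2 * D p.1 p.2 := by
  rw [Matrix.trace, ← Finset.univ_product_univ, Finset.sum_product]
  simp only [Matrix.diag, Matrix.mul_apply, Matrix.transpose_apply]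
  rw [Finset.sum_comm]

lemma trace_transpose_mul_self_nonneg (C : Mat) : 0 ≤ (Cᵀ * C).trace := by
  rw [trace_transpose_mul]
  exact Finset.sum_nonneg fun p _ => mul_self_nonneg _

lemma trace_CS (C D : Mat) :
    (Cᵀ * D).trace ^ 2 ≤ (Cᵀ * C).trace * (Dᵀ * D).trace := by
  rw [trace_transpose_mul, trace_transpose_mul, trace_transpose_mul]
  simpa [sq] using Finset.sum_mul_sq_le_sq_mul_sq Finset.univ
    (fun p : Fin n × Fin n => C p.1 p.2) (fun p => D p.1 p.2)

lemma mul_pow_succ (A B : Mat) (p : ℕ) : (A * B) ^ (p + 1) = A * (B * A) ^ p * B := by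
  induction p with
  | zero => simp
  | succ p ih => rw [pow_succ, ih]; noncomm_ring [pow_succ]

lemma trace_pow_cyc (A B : Mat) (p : ℕ) : ((A * B) ^ p).trace = ((B * A) ^ p).trace := by
  cases p with
  | zero => simp
  | succ p =>
    rw [mul_pow_succ, Matrix.trace_mul_comm, ← Matrix.mul_assoc, _root_.pow_succ']

/-- from `a^2 ≤ b^2`, `0 ≤ b` conclude `a ≤ b` -/
lemma gt_sq_le_imp {a b : ℝ} (h : a ^ 2 ≤ b ^ 2) (hb : 0 ≤ b) : a ≤ b := by
  nlinarith

lemma key_induction : ∀ k : ℕ,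
    (∀ X Y : Mat, X.IsSymm → Y.IsSymm →
      ((X * Y) ^ 2 ^ k).trace ≤ (X ^ 2 ^ k * Y ^ 2 ^ k).trace) ∧
    (∀ M : Mat, ((M ^ 2 ^ k)ᵀ * M ^ 2 ^ k).trace ≤ ((Mᵀ * M) ^ 2 ^ k).trace) := by
  intro k
  induction k with
  | zero => simp
  | succ k ih =>
    obtain ⟨Phi, Psi⟩ := ih
    have h2 : ∀ x : Mat, x ^ 2 ^ (k + 1) = (x ^ 2 ^ k) ^ 2 := by
      intro x; rw [← pow_mul, ← pow_succ]
    have h2' : ∀ x : Mat, x ^ 2 ^ (k + 1) = (x ^ 2) ^ 2 ^ k := by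
      intro x; rw [← pow_mul, ← _root_.pow_succ']
    constructor
    · intro X Y hX hY
      set M := X * Y with hM
      -- step 1: Tr[M^(2^(k+1))] ≤ Tr[(M^p)ᵀ M^p]
      have s1 : ((M ^ 2 ^ (k + 1)).trace) ≤ ((M ^ 2 ^ k)ᵀ * M ^ 2 ^ k).trace := by
        refine gt_sq_le_imp ?_ (trace_transpose_mul_self_nonneg _)
        have cs := trace_CS ((M ^ 2 ^ k)ᵀ) (M ^ 2 ^ k)
        rw [transpose_transpose,
          Matrix.trace_mul_comm (M ^ 2 ^ k) ((M ^ 2 ^ k)ᵀ)] at cs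
        have e3 : (M ^ 2 ^ (k + 1)).trace = (M ^ 2 ^ k * M ^ 2 ^ k).trace := by
          rw [h2, sq]
        rw [e3]
        exact cs.trans_eq (pow_two _).symm
      -- step 2: Psi
      have s2 := Psi M
      -- step 3: MᵀM = Y * (X^2 * Y)
      have e2 : Mᵀ * M = Y * (X ^ 2 * Y) := by
        rw [hM, transpose_mul, hX.eq, hY.eq, sq]
        noncomm_ring
      -- step 4: cyclic
      have s4 : ((Mᵀ * M) ^ 2 ^ k).trace = ((X ^ 2 * Y ^ 2) ^ 2 ^ k).trace := by
        rw [e2, trace_pow_cyc]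
        congr 2
        rw [sq Y]; noncomm_ring
      -- step 5: Phi on X², Y²
      have s5 : ((X ^ 2 * Y ^ 2) ^ 2 ^ k).trace ≤ ((X ^ 2) ^ 2 ^ k * (Y ^ 2) ^ 2 ^ k).trace :=
        Phi _ _ (by rw [Matrix.IsSymm, sq, transpose_mul, hX.eq]) (by rw [Matrix.IsSymm, sq, transpose_mul, hY.eq])
      calc (M ^ 2 ^ (k+1)).trace ≤ ((Mᵀ * M) ^ 2 ^ k).trace := le_trans s1 s2
        _ = ((X ^ 2 * Y ^ 2) ^ 2 ^ k).trace := s4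
        _ ≤ ((X ^ 2) ^ 2 ^ k * (Y ^ 2) ^ 2 ^ k).trace := s5
        _ = (X ^ 2 ^ (k+1) * Y ^ 2 ^ (k+1)).trace := by rw [h2' X, h2' Y]
    · intro M
      set Q := Mᵀ * M with hQ
      set P := M * Mᵀ with hP
      have hQs : Qᵀ = Q := by rw [hQ, transpose_mul, transpose_transpose]
      have hPs : Pᵀ = P := by rw [hP, transpose_mul, transpose_transpose]
      -- LHS = Tr[((M²)^p)ᵀ (M²)^p]
      have s1 := Psi (M ^ 2)
      have e1 : (M ^ 2) ^ 2 ^ k = M ^ 2 ^ (k + 1) := (h2' M).symm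
      -- (M²)ᵀ(M²) = Mᵀ * (Q * M)
      have e2 : (M ^ 2)ᵀ * M ^ 2 = Mᵀ * (Q * M) := by
        rw [sq, transpose_mul, hQ]; noncomm_ring
      have s2 : (((M ^ 2)ᵀ * M ^ 2) ^ 2 ^ k).trace = ((Q * P) ^ 2 ^ k).trace := by
        rw [e2, trace_pow_cyc]
        congr 2
        rw [hP]; noncomm_ring
      have s3 : ((Q * P) ^ 2 ^ k).trace ≤ (Q ^ 2 ^ k * P ^ 2 ^ k).trace :=
        Phi Q P hQs hPs
      -- CS + equality of P/Q power traces
      have ePQ : (P ^ (2 ^ (k+1))).trace = (Q ^ (2 ^ (k+1))).trace := by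
        rw [hP, hQ, trace_pow_cyc]
      have hQp : (Q ^ 2 ^ k)ᵀ = Q ^ 2 ^ k := by
        rw [transpose_pow, hQs]
      have hPp : (P ^ 2 ^ k)ᵀ = P ^ 2 ^ k := by
        rw [transpose_pow, hPs]
      have nonneg : 0 ≤ (Q ^ 2 ^ (k+1)).trace := by
        have := trace_transpose_mul_self_nonneg (Q ^ 2 ^ k)
        rwa [hQp, ← sq, ← h2] at this
      have s4 : (Q ^ 2 ^ k * P ^ 2 ^ k).trace ≤ (Q ^ 2 ^ (k+1)).trace := by
        refine gt_sq_le_imp ?_ nonneg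
        have cs := trace_CS (Q ^ 2 ^ k) (P ^ 2 ^ k)
        rw [hQp, hPp] at cs
        calc (Q ^ 2 ^ k * P ^ 2 ^ k).trace ^ 2
            ≤ (Q ^ 2 ^ k * Q ^ 2 ^ k).trace * (P ^ 2 ^ k * P ^ 2 ^ k).trace := cs
          _ = (Q ^ 2 ^ (k+1)).trace ^ 2 := by
              rw [← sq (Q ^ 2 ^ k), ← sq (P ^ 2 ^ k), ← h2, ← h2, ePQ, sq]
      calc ((M ^ 2 ^ (k+1))ᵀ * M ^ 2 ^ (k+1)).trace
          = (((M ^ 2) ^ 2 ^ k)ᵀ * (M ^ 2) ^ 2 ^ k).trace := by rw [e1]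
        _ ≤ (((M ^ 2)ᵀ * M ^ 2) ^ 2 ^ k).trace := s1
        _ = ((Q * P) ^ 2 ^ k).trace := s2
        _ ≤ (Q ^ 2 ^ k * P ^ 2 ^ k).trace := s3
        _ ≤ (Q ^ 2 ^ (k+1)).trace := s4
        _ = ((Mᵀ * M) ^ 2 ^ (k+1)).trace := rfl

noncomputable def g (t : ℝ) : ℝ := Real.exp t - 1 - t

lemma g_nonneg {t : ℝ} (ht : 0 ≤ t) : 0 ≤ g t := by
  have := Real.add_one_le_exp t
  simp only [g]; linarith

lemma g_mono {x t : ℝ} (hx : 0 ≤ x) (hxt : x ≤ t) : g x ≤ g t := by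
  have h1 : Real.exp x * (1 + (t - x)) ≤ Real.exp x * Real.exp (t - x) := by
    have := Real.add_one_le_exp (t - x)
    nlinarith [Real.exp_pos x]
  rw [← Real.exp_add, show x + (t - x) = t by ring] at h1
  have h2 : (1:ℝ) ≤ Real.exp x := Real.one_le_exp hx
  simp only [g]
  nlinarith [mul_nonneg (sub_nonneg.2 h2) (sub_nonneg.2 hxt)]
lemma g_le {t : ℝ} (ht : 0 ≤ t) : g t ≤ t ^ 2 * Real.exp t := by
  rcases le_or_gt 1 t with h | h
  · have h2 : Real.exp t * (1 - t^2) ≤ 0 := by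
      have ht2 : (0:ℝ) ≤ t^2 - 1 := by nlinarith
      nlinarith [mul_nonneg (Real.exp_pos t).le ht2]
    simp only [g]
    nlinarith [h2]
  · have h1 : Real.exp t * (1 - t) ≤ 1 := by
      have := Real.add_one_le_exp (-t)
      have h3 : Real.exp t * Real.exp (-t) = 1 := by
        rw [← Real.exp_add]; simp
      nlinarith [Real.exp_pos t, Real.exp_pos (-t)]
    simp only [g]
    nlinarith [Real.exp_pos t, ht]

-- the real scalar tail identity
lemma real_tail (a : ℝ) (ha : 0 ≤ a) :
    ∑' i : ℕ, (((i + 2)! : ℝ)⁻¹ * a ^ (i + 2)) = g a := by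
  have hsum : Summable fun i : ℕ => ((i ! : ℝ)⁻¹ * a ^ i) := by
    simpa [div_eq_inv_mul, mul_comm] using Real.summable_pow_div_factorial a
  have h2 := Summable.sum_add_tsum_nat_add (f := fun i : ℕ => ((i ! : ℝ)⁻¹ * a ^ i)) 2 hsum
  have hexp : ∑' i : ℕ, ((i ! : ℝ)⁻¹ * a ^ i) = Real.exp a := by
    rw [Real.exp_eq_exp_ℝ, exp_eq_tsum ℝ]
    simp [smul_eq_mul]
  rw [hexp] at h2
  have h3 : ∑ i ∈ Finset.range 2, ((i ! : ℝ)⁻¹ * a ^ i) = 1 + a := by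
    simp [Finset.sum_range_succ]
  rw [h3] at h2
  simp only [g]
  linarith

lemma norm_one_le : ‖(1 : Mat)‖ ≤ 1 := by
  rw [show (1 : Mat) = Matrix.diagonal (fun _ => (1:ℝ)) from rfl,
    Matrix.linfty_opNorm_diagonal]
  refine (pi_norm_le_iff_of_nonneg zero_le_one).2 fun i => by simp

lemma exp_tail_bound (x : Mat) : ‖exp x - 1 - x‖ ≤ g ‖x‖ := by
  have hsumM : Summable fun i : ℕ => ((i ! : ℝ)⁻¹ • x ^ i) := expSeries_summable' (𝕂 := ℝ) x
  have hsN : Summable fun i : ℕ => ‖((i ! : ℝ)⁻¹ • x ^ i)‖ := norm_expSeries_summable' (𝕂 := ℝ) x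
  have hsN2 : Summable fun i : ℕ => ‖(((i + 2)! : ℝ)⁻¹ • x ^ (i + 2))‖ :=
    (summable_nat_add_iff (f := fun i : ℕ => ‖((i ! : ℝ)⁻¹ • x ^ i)‖) 2).2 hsN
  have hsR : Summable fun i : ℕ => ((i ! : ℝ)⁻¹ * ‖x‖ ^ i) := by
    simpa [div_eq_inv_mul, mul_comm] using Real.summable_pow_div_factorial ‖x‖
  have hsR2 : Summable fun i : ℕ => (((i + 2)! : ℝ)⁻¹ * ‖x‖ ^ (i + 2)) :=
    (summable_nat_add_iff (f := fun i : ℕ => ((i ! : ℝ)⁻¹ * ‖x‖ ^ i)) 2).2 hsR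
  have h2 := Summable.sum_add_tsum_nat_add (f := fun i : ℕ => ((i ! : ℝ)⁻¹ • x ^ i)) 2 hsumM
  have hexp : ∑' i : ℕ, ((i ! : ℝ)⁻¹ • x ^ i) = exp x := by
    rw [exp_eq_tsum ℝ]
  rw [hexp] at h2
  have h3 : ∑ i ∈ Finset.range 2, ((i ! : ℝ)⁻¹ • x ^ i) = 1 + x := by
    simp [Finset.sum_range_succ]
  rw [h3] at h2
  have hdiff : exp x - 1 - x = ∑' i : ℕ, ((i + 2)! : ℝ)⁻¹ • x ^ (i + 2) := by
    rw [← h2]; abel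
  rw [hdiff, ← real_tail ‖x‖ (norm_nonneg x)]
  refine le_trans (norm_tsum_le_tsum_norm hsN2) (Summable.tsum_le_tsum (fun i => ?_) hsN2 hsR2)
  rw [norm_smul, norm_inv, Real.norm_natCast]
  exact mul_le_mul_of_nonneg_left (norm_pow_le' x (Nat.succ_pos _)) (by positivity)

lemma norm_exp_le_mat (x : Mat) : ‖exp x‖ ≤ Real.exp ‖x‖ := by
  have h := exp_tail_bound x
  have h2 : ‖exp x‖ ≤ ‖exp x - 1 - x‖ + ‖(1 : Mat)‖ + ‖x‖ := by
    have : exp x = (exp x - 1 - x) + 1 + x := by abel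
    calc ‖exp x‖ = ‖(exp x - 1 - x) + 1 + x‖ := by rw [← this]
      _ ≤ ‖(exp x - 1 - x) + 1‖ + ‖x‖ := norm_add_le _ _
      _ ≤ ‖exp x - 1 - x‖ + ‖(1 : Mat)‖ + ‖x‖ := by
          exact add_le_add (norm_add_le _ _) le_rfl
  have h1 := norm_one_le (n := n)
  simp only [g] at h
  linarith

lemma exp_prod_diff_bound (U V : Mat) :
    ‖exp U * exp V - exp (U + V)‖ ≤
      g ‖U‖ * Real.exp ‖V‖ + (1 + ‖U‖) * g ‖V‖ + ‖U‖ * ‖V‖ + g (‖U‖ + ‖V‖) := by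
  have key : exp U * exp V - exp (U + V) =
      (exp U - 1 - U) * exp V + (1 + U) * (exp V - 1 - V) + U * V
        - (exp (U + V) - 1 - (U + V)) := by
    noncomm_ring
  rw [key]
  have b1 : ‖(exp U - 1 - U) * exp V‖ ≤ g ‖U‖ * Real.exp ‖V‖ :=
    le_trans (norm_mul_le _ _) (mul_le_mul (exp_tail_bound U) (norm_exp_le_mat V)
      (norm_nonneg _) (g_nonneg (norm_nonneg _)))
  have b2 : ‖(1 + U) * (exp V - 1 - V)‖ ≤ (1 + ‖U‖) * g ‖V‖ := by
    refine le_trans (norm_mul_le _ _) (mul_le_mul ?_ (exp_tail_bound V) (norm_nonneg _) ?_)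
    · exact le_trans (norm_add_le _ _) (add_le_add norm_one_le le_rfl)
    · linarith [norm_nonneg U]
  have b3 : ‖U * V‖ ≤ ‖U‖ * ‖V‖ := norm_mul_le _ _
  have b4 : ‖exp (U + V) - 1 - (U + V)‖ ≤ g (‖U‖ + ‖V‖) :=
    le_trans (exp_tail_bound (U + V)) (g_mono (norm_nonneg _) (norm_add_le _ _))
  calc ‖(exp U - 1 - U) * exp V + (1 + U) * (exp V - 1 - V) + U * V
        - (exp (U + V) - 1 - (U + V))‖
      ≤ ‖(exp U - 1 - U) * exp V + (1 + U) * (exp V - 1 - V) + U * V‖ +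
        ‖exp (U + V) - 1 - (U + V)‖ := norm_sub_le _ _
    _ ≤ (‖(exp U - 1 - U) * exp V + (1 + U) * (exp V - 1 - V)‖ + ‖U * V‖) +
        ‖exp (U + V) - 1 - (U + V)‖ := by gcongr; exact norm_add_le _ _
    _ ≤ ((‖(exp U - 1 - U) * exp V‖ + ‖(1 + U) * (exp V - 1 - V)‖) + ‖U * V‖) +
        ‖exp (U + V) - 1 - (U + V)‖ := by gcongr; exact norm_add_le _ _
    _ ≤ _ := by linarith

lemma pow_diff_bound (P R : Mat) (c : ℝ) (hP : ‖P‖ ≤ c) (hR : ‖R‖ ≤ c) :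
    ∀ m : ℕ, ‖P ^ (m + 1) - R ^ (m + 1)‖ ≤ (m + 1 : ℝ) * c ^ m * ‖P - R‖ := by
  have hc : 0 ≤ c := le_trans (norm_nonneg _) hP
  intro m
  induction m with
  | zero => simp
  | succ m ih =>
    have key : P ^ (m + 2) - R ^ (m + 2) = P ^ (m + 1) * (P - R) + (P ^ (m + 1) - R ^ (m + 1)) * R := by
      noncomm_ring
    rw [key]
    have b1 : ‖P ^ (m + 1) * (P - R)‖ ≤ c ^ (m + 1) * ‖P - R‖ :=
      le_trans (norm_mul_le _ _) (mul_le_mul_of_nonneg_right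
        (le_trans (norm_pow_le' P (Nat.succ_pos _)) (pow_le_pow_left₀ (norm_nonneg _) hP _))
        (norm_nonneg _))
    have b2 : ‖(P ^ (m + 1) - R ^ (m + 1)) * R‖ ≤ ((m + 1 : ℝ) * c ^ m * ‖P - R‖) * c :=
      le_trans (norm_mul_le _ _) (mul_le_mul ih hR (norm_nonneg _) (by positivity))
    calc ‖P ^ (m + 1) * (P - R) + (P ^ (m + 1) - R ^ (m + 1)) * R‖
        ≤ ‖P ^ (m + 1) * (P - R)‖ + ‖(P ^ (m + 1) - R ^ (m + 1)) * R‖ := norm_add_le _ _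
      _ ≤ c ^ (m + 1) * ‖P - R‖ + ((m + 1 : ℝ) * c ^ m * ‖P - R‖) * c := add_le_add b1 b2
      _ ≤ (↑(m + 1) + 1 : ℝ) * c ^ (m + 1) * ‖P - R‖ := by
          push_cast
          ring_nf
          nlinarith [norm_nonneg (P - R), pow_nonneg hc m, pow_nonneg hc (m+1)]

lemma abs_trace_le (M : Mat) : |M.trace| ≤ (n : ℝ) * ‖M‖ := by
  have hentry : ∀ i : Fin n, |M i i| ≤ ‖M‖ := by
    intro i
    rw [Matrix.linfty_opNorm_def]
    have h1 : (‖M i i‖₊ : ℝ≥0) ≤ ∑ j, ‖M i j‖₊ :=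
      Finset.single_le_sum (f := fun j => ‖M i j‖₊) (fun _ _ => by positivity) (Finset.mem_univ i)
    have h2 : (∑ j, ‖M i j‖₊ : ℝ≥0) ≤ (Finset.univ.sup fun i : Fin n => ∑ j, ‖M i j‖₊) :=
      Finset.le_sup (f := fun i : Fin n => ∑ j, ‖M i j‖₊) (Finset.mem_univ i)
    calc |M i i| = ((‖M i i‖₊ : ℝ≥0) : ℝ) := by
          rw [coe_nnnorm, Real.norm_eq_abs]
      _ ≤ _ := by exact_mod_cast le_trans h1 h2
  calc |M.trace| ≤ ∑ i, |M i i| := Finset.abs_sum_le_sum_abs _ _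
    _ ≤ ∑ _i : Fin n, ‖M‖ := Finset.sum_le_sum fun i _ => hentry i
    _ = (n : ℝ) * ‖M‖ := by simp [mul_comm]

lemma bound_lemma (A B : Mat) (k : ℕ) :
    |((exp (((2:ℝ) ^ k)⁻¹ • A) * exp (((2:ℝ) ^ k)⁻¹ • B)) ^ 2 ^ k).trace
        - (exp (A + B)).trace| ≤
      ((n : ℝ) * (Real.exp (‖A‖ + ‖B‖) *
        ((Real.exp (‖A‖ + ‖B‖) * (Real.exp (‖A‖ + ‖B‖) + (‖A‖ + ‖B‖) + 2) + 1) *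
          (‖A‖ + ‖B‖) ^ 2))) * ((2:ℝ) ^ k)⁻¹ := by
  have h2pos : (0:ℝ) < 2 ^ k := by positivity
  set s : ℝ := ‖A‖ + ‖B‖ with hs
  have hs0 : 0 ≤ s := add_nonneg (norm_nonneg _) (norm_nonneg _)
  set C₀ : ℝ := Real.exp s * (Real.exp s + s + 2) + 1 with hC0
  have hC00 : 0 ≤ C₀ := by positivity
  set U : Mat := ((2:ℝ) ^ k)⁻¹ • A with hU
  set V : Mat := ((2:ℝ) ^ k)⁻¹ • B with hV
  set t : ℝ := s * ((2:ℝ) ^ k)⁻¹ with ht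
  have ht0 : 0 ≤ t := by positivity
  have hts : t ≤ s := by
    rw [ht]
    calc s * ((2:ℝ) ^ k)⁻¹ ≤ s * 1 := by
          refine mul_le_mul_of_nonneg_left ?_ hs0
          rw [inv_le_one_iff₀]
          right; exact one_le_pow₀ (by norm_num)
      _ = s := mul_one s
  have hnormU : ‖U‖ = ‖A‖ * ((2:ℝ) ^ k)⁻¹ := by
    rw [hU, norm_smul, norm_inv, Real.norm_eq_abs, abs_of_pos h2pos, mul_comm]
  have hnormV : ‖V‖ = ‖B‖ * ((2:ℝ) ^ k)⁻¹ := by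
    rw [hV, norm_smul, norm_inv, Real.norm_eq_abs, abs_of_pos h2pos, mul_comm]
  have hUt : ‖U‖ ≤ t := by
    rw [hnormU, ht]
    have : ‖A‖ ≤ s := by rw [hs]; linarith [norm_nonneg B]
    exact mul_le_mul_of_nonneg_right this (by positivity)
  have hVt : ‖V‖ ≤ t := by
    rw [hnormV, ht]
    have : ‖B‖ ≤ s := by rw [hs]; linarith [norm_nonneg A]
    exact mul_le_mul_of_nonneg_right this (by positivity)
  have hUVt : ‖U‖ + ‖V‖ ≤ t := by
    rw [hnormU, hnormV, ht, hs]
    exact le_of_eq (by ring)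
  set P : Mat := exp U * exp V with hP
  set R : Mat := exp (U + V) with hR
  set c : ℝ := Real.exp t with hc
  have hc1 : (1:ℝ) ≤ c := Real.one_le_exp ht0
  have hPc : ‖P‖ ≤ c := by
    calc ‖P‖ ≤ ‖exp U‖ * ‖exp V‖ := norm_mul_le _ _
      _ ≤ Real.exp ‖U‖ * Real.exp ‖V‖ :=
          mul_le_mul (norm_exp_le_mat _) (norm_exp_le_mat _) (norm_nonneg _) (Real.exp_nonneg _)
      _ = Real.exp (‖U‖ + ‖V‖) := (Real.exp_add _ _).symm
      _ ≤ c := Real.exp_le_exp.2 hUVt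
  have hRc : ‖R‖ ≤ c := by
    calc ‖R‖ ≤ Real.exp ‖U + V‖ := norm_exp_le_mat _
      _ ≤ c := Real.exp_le_exp.2 (le_trans (norm_add_le _ _) hUVt)
  have hPR : ‖P - R‖ ≤ C₀ * t ^ 2 := by
    have hd := exp_prod_diff_bound U V
    rw [← hR, ← hP] at hd
    have e1 : g ‖U‖ ≤ t ^ 2 * Real.exp s :=
      le_trans (g_mono (norm_nonneg _) hUt)
        (le_trans (g_le ht0) (mul_le_mul_of_nonneg_left (Real.exp_le_exp.2 hts) (by positivity)))
    have e2 : g ‖V‖ ≤ t ^ 2 * Real.exp s :=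
      le_trans (g_mono (norm_nonneg _) hVt)
        (le_trans (g_le ht0) (mul_le_mul_of_nonneg_left (Real.exp_le_exp.2 hts) (by positivity)))
    have e3 : g (‖U‖ + ‖V‖) ≤ t ^ 2 * Real.exp s :=
      le_trans (g_mono (add_nonneg (norm_nonneg _) (norm_nonneg _)) hUVt)
        (le_trans (g_le ht0) (mul_le_mul_of_nonneg_left (Real.exp_le_exp.2 hts) (by positivity)))
    have e4 : Real.exp ‖V‖ ≤ Real.exp s := Real.exp_le_exp.2 (le_trans hVt hts)
    have e5 : ‖U‖ * ‖V‖ ≤ t ^ 2 := by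
      rw [sq]
      exact mul_le_mul hUt hVt (norm_nonneg _) ht0
    have e6 : g ‖U‖ * Real.exp ‖V‖ ≤ t ^ 2 * Real.exp s * Real.exp s :=
      mul_le_mul e1 e4 (Real.exp_nonneg _) (by positivity)
    have e7 : (1 + ‖U‖) * g ‖V‖ ≤ (1 + s) * (t ^ 2 * Real.exp s) :=
      mul_le_mul (by linarith [hUt, hts]) e2 (g_nonneg (norm_nonneg _)) (by linarith)
    refine hd.trans ?_
    rw [hC0]
    nlinarith [sq_nonneg t, Real.exp_pos s]
  set q : ℕ := 2 ^ k - 1 with hq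
  have hq1 : q + 1 = 2 ^ k := Nat.succ_pred_eq_of_pos (Nat.pow_pos (by norm_num))
  have hqcast : ((q : ℝ) + 1) = (2:ℝ) ^ k := by
    have := congrArg (Nat.cast (R := ℝ)) hq1
    push_cast at this
    exact this
  have hpd := pow_diff_bound P R c hPc hRc q
  have hRpow : R ^ (q + 1) = exp (A + B) := by
    rw [hq1, hR, hU, hV, ← smul_add, ← Matrix.exp_nsmul, ← Nat.cast_smul_eq_nsmul ℝ, smul_smul]
    push_cast
    rw [mul_inv_cancel₀ h2pos.ne', one_smul]
  have hcq : c ^ (q + 1) = Real.exp s := by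
    rw [hc, ← Real.exp_nat_mul]
    congr 1
    push_cast [hqcast]
    rw [ht]
    field_simp
  have hcq' : c ^ q ≤ Real.exp s := by
    rw [← hcq]
    exact pow_le_pow_right₀ hc1 (Nat.le_succ q)
  calc |(P ^ 2 ^ k).trace - (exp (A + B)).trace|
      = |(P ^ (q + 1) - R ^ (q + 1)).trace| := by rw [← hq1, ← hRpow, Matrix.trace_sub]
    _ ≤ (n : ℝ) * ‖P ^ (q + 1) - R ^ (q + 1)‖ := abs_trace_le _
    _ ≤ (n : ℝ) * (((q : ℝ) + 1) * c ^ q * ‖P - R‖) :=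
        mul_le_mul_of_nonneg_left hpd (Nat.cast_nonneg n)
    _ ≤ (n : ℝ) * ((2:ℝ) ^ k * Real.exp s * (C₀ * t ^ 2)) := by
        refine mul_le_mul_of_nonneg_left ?_ (Nat.cast_nonneg n)
        rw [hqcast]
        exact mul_le_mul (mul_le_mul_of_nonneg_left hcq' (by positivity)) hPR (norm_nonneg _)
          (by positivity)
    _ = ((n : ℝ) * (Real.exp s * (C₀ * s ^ 2))) * ((2:ℝ) ^ k)⁻¹ := by
        rw [ht]
        field_simp

/-- Golden–Thompson inequality: for symmetric real matrices `A` and `B`,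
`Tr[exp(A + B)] ≤ Tr[exp(A) exp(B)]`. -/
theorem golden_thompson {n : ℕ} (A B : Matrix (Fin n) (Fin n) ℝ)
    (hA : A.IsHermitian) (hB : B.IsHermitian) :
    (NormedSpace.exp (A + B)).trace ≤ (NormedSpace.exp A * NormedSpace.exp B).trace := by
  have hAs : A.IsSymm := by rwa [Matrix.IsHermitian, conjTranspose_eq_transpose_of_trivial] at hA
  have hBs : B.IsSymm := by rwa [Matrix.IsHermitian, conjTranspose_eq_transpose_of_trivial] at hB
  have h2pos : ∀ k : ℕ, (0:ℝ) < 2 ^ k := fun k => by positivity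
  have hpow : ∀ (C : Matrix (Fin n) (Fin n) ℝ) (k : ℕ),
      (exp (((2:ℝ) ^ k)⁻¹ • C)) ^ 2 ^ k = exp C := by
    intro C k
    rw [← Matrix.exp_nsmul, ← Nat.cast_smul_eq_nsmul ℝ, smul_smul]
    push_cast
    rw [mul_inv_cancel₀ (h2pos k).ne', one_smul]
  set f : ℕ → ℝ := fun k =>
    ((exp (((2:ℝ) ^ k)⁻¹ • A) * exp (((2:ℝ) ^ k)⁻¹ • B)) ^ 2 ^ k).trace with hf
  have step : ∀ k, f k ≤ (exp A * exp B).trace := by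
    intro k
    have hXs : (exp (((2:ℝ) ^ k)⁻¹ • A)).IsSymm := Matrix.IsSymm.exp (by
      rw [Matrix.IsSymm, transpose_smul, hAs.eq])
    have hYs : (exp (((2:ℝ) ^ k)⁻¹ • B)).IsSymm := Matrix.IsSymm.exp (by
      rw [Matrix.IsSymm, transpose_smul, hBs.eq])
    have h := (key_induction (n := n) k).1 _ _ hXs hYs
    rwa [hpow A k, hpow B k] at h
  set L : ℝ := (exp (A + B)).trace with hL
  set C₁ : ℝ := (n : ℝ) * (Real.exp (‖A‖ + ‖B‖) *
    ((Real.exp (‖A‖ + ‖B‖) * (Real.exp (‖A‖ + ‖B‖) + (‖A‖ + ‖B‖) + 2) + 1) *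
      (‖A‖ + ‖B‖) ^ 2)) with hC1
  have htend0 : Filter.Tendsto (fun k : ℕ => C₁ * ((2:ℝ) ^ k)⁻¹) Filter.atTop (nhds 0) := by
    have h1 : Filter.Tendsto (fun k : ℕ => ((2:ℝ)⁻¹) ^ k) Filter.atTop (nhds 0) :=
      tendsto_pow_atTop_nhds_zero_of_lt_one (by norm_num) (by norm_num)
    have h2 := h1.const_mul C₁
    rw [mul_zero] at h2
    refine h2.congr fun k => ?_
    rw [inv_pow]
  have htendf : Filter.Tendsto f Filter.atTop (nhds L) := by
    have hz : Filter.Tendsto (fun k => f k - L) Filter.atTop (nhds 0) :=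
      squeeze_zero_norm (fun k => by
        rw [Real.norm_eq_abs]
        exact bound_lemma A B k) htend0
    have h3 := hz.add_const L
    simpa using h3
  exact le_of_tendsto htendf (Filter.Eventually.of_forall step)

end GoldenThompsonAux
end

section
/- Weak duality for entropically regularized SDP: for any λ ∈ ℝ^m and any symmetric positive definite X satisfying Tr[AᵢX] = bᵢ for all i, it holds that b·λ − β⁻¹ Tr[exp(−β(C − λ·A))] ≤ Tr[CX] + β⁻¹ Tr[X log X − X]. -/
open Matrix

/-- Scalar Young-type inequality: `h * x ≤ x log x - x + exp h` for `x > 0`. -/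
lemma scalar_young (h x : ℝ) (hx : 0 < x) :
    h * x ≤ x * Real.log x - x + Real.exp h := by
  have e1 : x * Real.exp (h - Real.log x) = Real.exp h := by
    nth_rw 1 [← Real.exp_log hx]; rw [← Real.exp_add]; ring_nf
  nlinarith [Real.add_one_le_exp (h - Real.log x), e1, hx]

lemma trace_diag_conj {n : ℕ} (d e : Fin n → ℝ) (W : Matrix (Fin n) (Fin n) ℝ) :
    (diagonal d * W * diagonal e * star W).trace = ∑ i, ∑ j, d i * e j * W i j ^ 2 := by
  have hsW : star W = Wᴴ := rfl
  simp only [Matrix.trace, Matrix.diag_apply, hsW, Matrix.mul_apply, Matrix.conjTranspose_apply,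
    star_trivial, Matrix.diagonal_apply, ite_mul, mul_ite, zero_mul, mul_zero,
    Finset.sum_ite_eq, Finset.sum_ite_eq', Finset.mem_univ, if_true, Finset.sum_mul]
  apply Finset.sum_congr rfl; intro i _
  apply Finset.sum_congr rfl; intro j _
  ring

lemma trace_conj_pair {n : ℕ} (V U Dd Dx : Matrix (Fin n) (Fin n) ℝ) :
    (V * Dd * star V * (U * Dx * star U)).trace
      = (Dd * (star V * U) * Dx * star (star V * U)).trace := by
  rw [show V * Dd * star V * (U * Dx * star U)
      = V * (Dd * (star V * U * Dx * star U)) from by noncomm_ring,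
    Matrix.trace_mul_comm, Matrix.star_mul, star_star]
  congr 1
  noncomm_ring

/-- Key trace inequality (Gibbs variational / matrix Young inequality):
`Tr[H X] ≤ Tr[X log X] - Tr[X] + Tr[exp H]` for Hermitian `H` and positive definite `X`. -/
lemma trace_young {n : ℕ} (H X : Matrix (Fin n) (Fin n) ℝ) (hH : H.IsHermitian)
    (hX : X.PosDef) :
    (H * X).trace ≤ (X * matLog X).trace - X.trace + (NormedSpace.exp H).trace := by
  classical
  have hXh : X.IsHermitian := hX.1
  set U : Matrix (Fin n) (Fin n) ℝ := (hXh.eigenvectorUnitary : Matrix (Fin n) (Fin n) ℝ) with hUdef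
  set x : Fin n → ℝ := hXh.eigenvalues with hxdef
  set V : Matrix (Fin n) (Fin n) ℝ := (hH.eigenvectorUnitary : Matrix (Fin n) (Fin n) ℝ) with hVdef
  set d : Fin n → ℝ := hH.eigenvalues with hddef
  have hUU : U * star U = 1 := Matrix.mem_unitaryGroup_iff.mp hXh.eigenvectorUnitary.2
  have hUU' : star U * U = 1 := Matrix.mem_unitaryGroup_iff'.mp hXh.eigenvectorUnitary.2
  have hVV : V * star V = 1 := Matrix.mem_unitaryGroup_iff.mp hH.eigenvectorUnitary.2
  have hVV' : star V * V = 1 := Matrix.mem_unitaryGroup_iff'.mp hH.eigenvectorUnitary.2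
  have hXd : X = U * diagonal x * star U := by simpa using hXh.spectral_theorem
  have hHd : H = V * diagonal d * star V := by simpa using hH.spectral_theorem
  set W : Matrix (Fin n) (Fin n) ℝ := star V * U with hWdef
  -- row and column sums of W² are 1
  have hWW : W * star W = 1 := by
    rw [hWdef, Matrix.star_mul, star_star, Matrix.mul_assoc, ← Matrix.mul_assoc U, hUU, Matrix.one_mul,
      hVV']
  have hWW' : star W * W = 1 := by
    rw [hWdef, Matrix.star_mul, star_star, Matrix.mul_assoc, ← Matrix.mul_assoc V, hVV, Matrix.one_mul,
      hUU']
  have hrow : ∀ i, ∑ j, W i j ^ 2 = 1 := by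
    intro i
    have := congrFun (congrFun hWW i) i
    simpa [Matrix.mul_apply, Matrix.one_apply, sq] using this
  have hcol : ∀ j, ∑ i, W i j ^ 2 = 1 := by
    intro j
    have := congrFun (congrFun hWW' j) j
    simpa [Matrix.mul_apply, Matrix.one_apply, sq, mul_comm] using this
  -- trace identities
  have t1 : (H * X).trace = ∑ i, ∑ j, d i * x j * W i j ^ 2 := by
    conv_lhs => rw [hHd, hXd]
    rw [trace_conj_pair, ← hWdef, trace_diag_conj]
  have tlog : matLog X = U * diagonal (Real.log ∘ x) * star U := by
    rw [matLog, dif_pos hXh, Matrix.IsHermitian.cfc]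
    simp [hUdef, hxdef]
  have t2 : (X * matLog X).trace = ∑ j, x j * Real.log (x j) := by
    conv_lhs => rw [tlog, hXd]
    rw [trace_conj_pair, hUU', star_one, Matrix.mul_one, Matrix.mul_one,
      Matrix.diagonal_mul_diagonal, Matrix.trace_diagonal]
    rfl
  have t3 : X.trace = ∑ j, x j := by
    conv_lhs => rw [hXd]
    rw [Matrix.trace_mul_cycle, hUU', Matrix.one_mul, Matrix.trace_diagonal]
  have hinv : V⁻¹ = star V := Matrix.inv_eq_right_inv hVV
  have hunit : IsUnit V := ⟨⟨_, _, hVV, hVV'⟩, rfl⟩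
  have t4 : (NormedSpace.exp H).trace = ∑ i, Real.exp (d i) := by
    rw [← hinv] at hHd
    conv_lhs => rw [hHd]
    rw [Matrix.exp_conj _ _ hunit, hinv, Matrix.trace_mul_cycle, hVV', Matrix.one_mul,
      Matrix.exp_diagonal, Matrix.trace_diagonal]
    congr 1; funext i
    rw [Pi.exp_def]
    exact (Real.exp_eq_exp_ℝ ▸ rfl)
  rw [t1, t2, t3, t4]
  have hxpos : ∀ j, 0 < x j := fun j => hX.eigenvalues_pos j
  calc ∑ i, ∑ j, d i * x j * W i j ^ 2
      ≤ ∑ i, ∑ j, ((x j * Real.log (x j) - x j) * W i j ^ 2 + Real.exp (d i) * W i j ^ 2) := by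
        refine Finset.sum_le_sum fun i _ => Finset.sum_le_sum fun j _ => ?_
        have h1 := scalar_young (d i) (x j) (hxpos j)
        nlinarith [sq_nonneg (W i j)]
    _ = (∑ j, x j * Real.log (x j)) - (∑ j, x j) + ∑ i, Real.exp (d i) := by
        have A : ∑ i, ∑ j, (x j * Real.log (x j) - x j) * W i j ^ 2
            = ∑ j, (x j * Real.log (x j) - x j) := by
          rw [Finset.sum_comm]
          refine Finset.sum_congr rfl fun j _ => ?_
          rw [← Finset.mul_sum, hcol j, mul_one]
        have B : ∑ i, ∑ j, Real.exp (d i) * W i j ^ 2 = ∑ i, Real.exp (d i) := by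
          refine Finset.sum_congr rfl fun i _ => ?_
          rw [← Finset.mul_sum, hrow i, mul_one]
        simp only [Finset.sum_add_distrib, A, B, Finset.sum_sub_distrib]

/-- Weak duality for the entropically regularized SDP: for any `λ ∈ ℝ^m` and any symmetric
positive definite `X` with `Tr[AᵢX] = bᵢ` for all `i`,
`b·λ − β⁻¹ Tr[exp(−β(C − λ·A))] ≤ Tr[CX] + β⁻¹ Tr[X log X − X]`. -/
theorem entropic_weak_duality {n m : ℕ} (C : Matrix (Fin n) (Fin n) ℝ) (hC : C.IsHermitian)
    (A : Fin m → Matrix (Fin n) (Fin n) ℝ) (hA : ∀ i, (A i).IsHermitian)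
    (b : Fin m → ℝ) (β : ℝ) (hβ : 0 < β) :
    ∀ (l : Fin m → ℝ) (X : Matrix (Fin n) (Fin n) ℝ), X.PosDef →
      (∀ i, (A i * X).trace = b i) →
      b ⬝ᵥ l - β⁻¹ * (NormedSpace.exp ((-β) • (C - ∑ i, l i • A i))).trace ≤
        (C * X).trace + β⁻¹ * (X * matLog X - X).trace := by
  intro l X hX hb
  set L : Matrix (Fin n) (Fin n) ℝ := ∑ i, l i • A i with hLdef
  set H : Matrix (Fin n) (Fin n) ℝ := (-β) • (C - L) with hHdef
  have hL : L.IsHermitian := by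
    rw [hLdef]
    unfold Matrix.IsHermitian
    rw [Matrix.conjTranspose_sum]
    refine Finset.sum_congr rfl fun i _ => ?_
    rw [Matrix.conjTranspose_smul, star_trivial, (hA i).eq]
  have hHerm : H.IsHermitian := by
    rw [hHdef]
    unfold Matrix.IsHermitian
    rw [Matrix.conjTranspose_smul, star_trivial, (hC.sub hL).eq]
  have hbl : b ⬝ᵥ l = (L * X).trace := by
    rw [hLdef, Matrix.sum_mul]
    simp only [Matrix.smul_mul, Matrix.trace_sum, Matrix.trace_smul, smul_eq_mul]
    rw [dotProduct]
    refine Finset.sum_congr rfl fun i _ => ?_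
    rw [hb i, mul_comm]
  have hHX : (H * X).trace = -β * ((C * X).trace - (L * X).trace) := by
    rw [hHdef, Matrix.smul_mul, Matrix.trace_smul, Matrix.sub_mul, Matrix.trace_sub, smul_eq_mul]
  have key := trace_young H X hHerm hX
  rw [hHX] at key
  have hβi : (0:ℝ) < β⁻¹ := inv_pos.mpr hβ
  rw [Matrix.trace_sub, hbl]
  set T1 := (L * X).trace
  set T2 := (C * X).trace
  set S1 := (X * matLog X).trace
  set S2 := X.trace
  set E := (NormedSpace.exp H).trace
  have h6 : -(T2 - T1) ≤ β⁻¹ * (S1 - S2 + E) := by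
    have h7 := mul_le_mul_of_nonneg_left key hβi.le
    calc -(T2 - T1) = β⁻¹ * (-β * (T2 - T1)) := by field_simp
    _ ≤ _ := h7
  nlinarith [h6]
end
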